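/- arXiv:2009.01681 — 5 statements merged into one kernel-verified Lean document; each statement's English description precedes it below -/
import Mathlib

section
/- Let k be a field, m,n positive integers, N an invertible n×n matrix over k, and M = 0_m ⊕ N. The map φ : o(M) → gl_m(k) × o(N) sending a block matrix [[A,B],[0,D]] ∈ o(M) to the pair (A,D) is a surjective homomorphism of Lie algebras; its kernel is the abelian Lie ideal of o(M) consisting of the matrices of the form [[0,B],[0,0]] with B an arbitrary m×n matrix; and the map (A,D) ↦ [[A,0],[0,D]] is a Lie algebra homomorphism which is a section of φ. -/
open Matrix LieAlgebra

attribute [local instance 100] LieRing.ofAssociativeRing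

/-- The Lie algebra `o(M) = {X ∈ gl | Xᵀ * M + M * X = 0}` of matrices preserving the
bilinear form with Gram matrix `M`. -/
def lieO (k : Type) [Field k] {ι : Type} [Fintype ι] [DecidableEq ι]
    (M : Matrix ι ι k) : LieSubalgebra k (Matrix ι ι k) where
  carrier := {X | Xᵀ * M + M * X = 0}
  zero_mem' := by simp
  add_mem' := by
    intro X Y hX hY
    simp only [Set.mem_setOf_eq] at *
    rw [Matrix.transpose_add, Matrix.add_mul, Matrix.mul_add, add_add_add_comm, hX, hY, add_zero]
  smul_mem' := by
    intro c X hX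
    simp only [Set.mem_setOf_eq] at *
    rw [Matrix.transpose_smul, Matrix.smul_mul, Matrix.mul_smul, ← smul_add, hX, smul_zero]
  lie_mem' := by
    intro X Y hX hY
    simp only [Set.mem_setOf_eq] at *
    have hX' : Xᵀ * M = -(M * X) := eq_neg_of_add_eq_zero_left hX
    have hY' : Yᵀ * M = -(M * Y) := eq_neg_of_add_eq_zero_left hY
    have h1 : Yᵀ * Xᵀ * M = M * Y * X := by
      rw [mul_assoc, hX', mul_neg, ← mul_assoc, hY', neg_mul, neg_neg]
    have h2 : Xᵀ * Yᵀ * M = M * X * Y := by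
      rw [mul_assoc, hY', mul_neg, ← mul_assoc, hX', neg_mul, neg_neg]
    simp only [Ring.lie_def, Matrix.transpose_sub, Matrix.transpose_mul, Matrix.sub_mul,
      Matrix.mul_sub]
    rw [h1, h2, ← mul_assoc M X Y, ← mul_assoc M Y X]
    abel

instance prodBracket {L M : Type} [LieRing L] [LieRing M] : Bracket (L × M) (L × M) :=
  ⟨fun x y => (⁅x.1, y.1⁆, ⁅x.2, y.2⁆)⟩

@[simp] lemma prod_bracket_fst {L M : Type} [LieRing L] [LieRing M] (x y : L × M) :
    ⁅x, y⁆.1 = ⁅x.1, y.1⁆ := rfl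

@[simp] lemma prod_bracket_snd {L M : Type} [LieRing L] [LieRing M] (x y : L × M) :
    ⁅x, y⁆.2 = ⁅x.2, y.2⁆ := rfl

/-- The product of two Lie rings, with componentwise bracket. -/
instance prodLieRing {L M : Type} [LieRing L] [LieRing M] : LieRing (L × M) where
  add_lie x y z := by ext <;> simp
  lie_add x y z := by ext <;> simp
  lie_self x := by ext <;> simp
  leibniz_lie x y z := by ext <;> simp

/-- The product of two Lie algebras. -/
instance prodLieAlgebra (k : Type) {L M : Type} [CommRing k] [LieRing L] [LieRing M]
    [LieAlgebra k L] [LieAlgebra k M] : LieAlgebra k (L × M) where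
  lie_smul c x y := by ext <;> simp


section Aux

variable {k : Type} [Field k] {m n : ℕ}

lemma mem_lieO_iff {ι : Type} [Fintype ι] [DecidableEq ι] {X : Matrix ι ι k}
    {M : Matrix ι ι k} : X ∈ lieO k M ↔ Xᵀ * M + M * X = 0 := Iff.rfl

lemma mem_lieO_blocks_iff (N : Matrix (Fin n) (Fin n) k) (hN : IsUnit N)
    (X : Matrix (Fin m ⊕ Fin n) (Fin m ⊕ Fin n) k) :
    X ∈ lieO k (Matrix.fromBlocks 0 0 0 N) ↔
      X.toBlocks₂₁ = 0 ∧ X.toBlocks₂₂ ∈ lieO k N := by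
  have hXb := (Matrix.fromBlocks_toBlocks X).symm
  set A := X.toBlocks₁₁; set B := X.toBlocks₁₂; set C := X.toBlocks₂₁; set D := X.toBlocks₂₂
  have hNinv : N⁻¹ * N = 1 := Matrix.nonsing_inv_mul N ((Matrix.isUnit_iff_isUnit_det N).mp hN)
  constructor
  · intro h
    rw [mem_lieO_iff, hXb] at h
    simp only [Matrix.fromBlocks_transpose, Matrix.fromBlocks_multiply,
      Matrix.fromBlocks_add, Matrix.mul_zero, Matrix.zero_mul, add_zero, zero_add] at h
    have h21 := congrArg Matrix.toBlocks₂₁ h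
    have h22 := congrArg Matrix.toBlocks₂₂ h
    simp only [Matrix.toBlocks_fromBlocks₂₁, Matrix.toBlocks_fromBlocks₂₂] at h21 h22
    have hC : C = 0 := by
      have : N⁻¹ * (N * C) = 0 := by rw [show N * C = 0 from by simpa using h21.trans (show toBlocks₂₁ (0 : Matrix (Fin m ⊕ Fin n) (Fin m ⊕ Fin n) k) = 0 by ext; rfl), Matrix.mul_zero]
      rwa [← Matrix.mul_assoc, hNinv, Matrix.one_mul] at this
    refine ⟨hC, ?_⟩
    rw [mem_lieO_iff]
    simpa using h22.trans (show toBlocks₂₂ (0 : Matrix (Fin m ⊕ Fin n) (Fin m ⊕ Fin n) k) = 0 by ext; rfl)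
  · rintro ⟨hC, hD⟩
    rw [mem_lieO_iff, hXb]
    simp only [Matrix.fromBlocks_transpose, Matrix.fromBlocks_multiply,
      Matrix.fromBlocks_add, Matrix.mul_zero, Matrix.zero_mul, add_zero, zero_add, hC]
    rw [mem_lieO_iff] at hD
    simp [hD]

end Aux

/-- For `M = 0ₘ ⊕ N` with `N` invertible, the map
`φ : o(M) → gl_m(k) × o(N)`, `[[A,B],[0,D]] ↦ (A, D)`, is a surjective Lie algebra
homomorphism; its kernel is the abelian Lie ideal of matrices `[[0,B],[0,0]]`; and
`(A, D) ↦ [[A,0],[0,D]]` is a Lie algebra homomorphism which is a section of `φ`. -/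
theorem lieO_blockDiag_projection (k : Type) [Field k] (m n : ℕ) (hm : 0 < m) (hn : 0 < n)
    (N : Matrix (Fin n) (Fin n) k) (hN : IsUnit N) :
    ∃ φ : ↥(lieO k (Matrix.fromBlocks 0 0 0 N : Matrix (Fin m ⊕ Fin n) (Fin m ⊕ Fin n) k))
        →ₗ⁅k⁆ (Matrix (Fin m) (Fin m) k × ↥(lieO k N)),
      (∀ X, (φ X).1 = (X : Matrix (Fin m ⊕ Fin n) (Fin m ⊕ Fin n) k).toBlocks₁₁ ∧
          ((φ X).2 : Matrix (Fin n) (Fin n) k) =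
            (X : Matrix (Fin m ⊕ Fin n) (Fin m ⊕ Fin n) k).toBlocks₂₂) ∧
      Function.Surjective φ ∧
      (∀ X, φ X = 0 ↔ ∃ B : Matrix (Fin m) (Fin n) k,
          (X : Matrix (Fin m ⊕ Fin n) (Fin m ⊕ Fin n) k) = Matrix.fromBlocks 0 B 0 0) ∧
      (∀ X Y, φ X = 0 → φ Y = 0 → ⁅X, Y⁆ = 0) ∧
      ∃ s : (Matrix (Fin m) (Fin m) k × ↥(lieO k N)) →ₗ⁅k⁆
          ↥(lieO k (Matrix.fromBlocks 0 0 0 N : Matrix (Fin m ⊕ Fin n) (Fin m ⊕ Fin n) k)),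
        (∀ p, (s p : Matrix (Fin m ⊕ Fin n) (Fin m ⊕ Fin n) k) =
            Matrix.fromBlocks p.1 0 0 (p.2 : Matrix (Fin n) (Fin n) k)) ∧
        ∀ p, φ (s p) = p := by
    classical
  have hmem := mem_lieO_blocks_iff (m := m) N hN
  set M : Matrix (Fin m ⊕ Fin n) (Fin m ⊕ Fin n) k := Matrix.fromBlocks 0 0 0 N with hM
  -- block product lemma
  have hC : ∀ X : ↥(lieO k M), X.val.toBlocks₂₁ = 0 :=
    fun X => ((hmem _).mp X.2).1
  have hDmem : ∀ X : ↥(lieO k M), X.val.toBlocks₂₂ ∈ lieO k N :=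
    fun X => ((hmem _).mp X.2).2
  have hmul11 : ∀ X Y : Matrix (Fin m ⊕ Fin n) (Fin m ⊕ Fin n) k,
      X.toBlocks₂₁ = 0 → Y.toBlocks₂₁ = 0 →
      (X * Y).toBlocks₁₁ = X.toBlocks₁₁ * Y.toBlocks₁₁ := by
    intro X Y hX hY
    conv_lhs => rw [← Matrix.fromBlocks_toBlocks X, ← Matrix.fromBlocks_toBlocks Y]
    simp [Matrix.fromBlocks_multiply, hX, hY]
  have hmul22 : ∀ X Y : Matrix (Fin m ⊕ Fin n) (Fin m ⊕ Fin n) k,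
      X.toBlocks₂₁ = 0 → Y.toBlocks₂₁ = 0 →
      (X * Y).toBlocks₂₂ = X.toBlocks₂₂ * Y.toBlocks₂₂ := by
    intro X Y hX hY
    conv_lhs => rw [← Matrix.fromBlocks_toBlocks X, ← Matrix.fromBlocks_toBlocks Y]
    simp [Matrix.fromBlocks_multiply, hX, hY]
  refine ⟨{ toFun := fun X => (X.val.toBlocks₁₁,
              ⟨X.val.toBlocks₂₂, hDmem X⟩)
            map_add' := ?_
            map_smul' := ?_
            map_lie' := ?_ }, ?_, ?_, ?_, ?_, ?_⟩
  · intro X Y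
    rfl
  · intro c X
    rfl
  · intro X Y
    have hb : (⁅X, Y⁆ : ↥(lieO k M)).val
        = X.val * Y - Y.val * X := rfl
    have hb' : ((⁅X.val.toBlocks₂₂,
          Y.val.toBlocks₂₂⁆ : Matrix (Fin n) (Fin n) k))
        = X.val.toBlocks₂₂ * Y.val.toBlocks₂₂
          - Y.val.toBlocks₂₂ * X.val.toBlocks₂₂ := rfl
    ext i j
    · show ((X.val * Y - Y.val * X).toBlocks₁₁) i j = _
      have : (X.val * Y - Y.val * X).toBlocks₁₁
          = X.val.toBlocks₁₁ * Y.val.toBlocks₁₁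
            - Y.val.toBlocks₁₁ * X.val.toBlocks₁₁ := by
        have hs : (X.val * Y - Y.val * X).toBlocks₁₁
            = (X.val * Y).toBlocks₁₁ - (Y.val * X).toBlocks₁₁ := by
          ext a b; simp [Matrix.toBlocks₁₁]
        rw [hs, hmul11 _ _ (hC X) (hC Y), hmul11 _ _ (hC Y) (hC X)]
      rw [this]
      rfl
    · show ((X.val * Y - Y.val * X).toBlocks₂₂) i j = _
      have : (X.val * Y - Y.val * X).toBlocks₂₂
          = X.val.toBlocks₂₂ * Y.val.toBlocks₂₂
            - Y.val.toBlocks₂₂ * X.val.toBlocks₂₂ := by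
        have hs : (X.val * Y - Y.val * X).toBlocks₂₂
            = (X.val * Y).toBlocks₂₂ - (Y.val * X).toBlocks₂₂ := by
          ext a b; simp [Matrix.toBlocks₂₂]
        rw [hs, hmul22 _ _ (hC X) (hC Y), hmul22 _ _ (hC Y) (hC X)]
      rw [this]
      rfl
  · intro X; exact ⟨rfl, rfl⟩
  · -- surjectivity
    rintro ⟨A, D⟩
    refine ⟨⟨Matrix.fromBlocks A 0 0 D.val, ?_⟩, ?_⟩
    · rw [hmem]; simp [D.2]
    · ext i j
      · rfl
      · rfl
  · -- kernel
    intro X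
    constructor
    · intro h
      have h1 : X.val.toBlocks₁₁ = 0 := congrArg Prod.fst h
      have h2 : X.val.toBlocks₂₂ = 0 := by
        have := congrArg Prod.snd h
        exact congrArg Subtype.val this
      refine ⟨X.val.toBlocks₁₂, ?_⟩
      conv_lhs => rw [← Matrix.fromBlocks_toBlocks X.val]
      rw [h1, h2, hC X]
    · rintro ⟨B, hB⟩
      have h1 : X.val.toBlocks₁₁ = 0 := by rw [hB]; simp
      have h2 : X.val.toBlocks₂₂ = 0 := by rw [hB]; simp
      ext i j
      · exact congrFun (congrFun h1 i) j
      · exact congrFun (congrFun h2 i) j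
  · -- abelian kernel
    intro X Y hX hY
    have h1X : X.val.toBlocks₁₁ = 0 := congrArg Prod.fst hX
    have h2X : X.val.toBlocks₂₂ = 0 := congrArg Subtype.val (congrArg Prod.snd hX)
    have h1Y : Y.val.toBlocks₁₁ = 0 := congrArg Prod.fst hY
    have h2Y : Y.val.toBlocks₂₂ = 0 := congrArg Subtype.val (congrArg Prod.snd hY)
    have eX : X.val = Matrix.fromBlocks 0 X.val.toBlocks₁₂ 0 0 := by
      conv_lhs => rw [← Matrix.fromBlocks_toBlocks X.val]
      rw [h1X, h2X, hC X]
    have eY : Y.val = Matrix.fromBlocks 0 Y.val.toBlocks₁₂ 0 0 := by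
      conv_lhs => rw [← Matrix.fromBlocks_toBlocks Y.val]
      rw [h1Y, h2Y, hC Y]
    have p1 : X.val * Y.val = 0 := by
      rw [eX, eY]; simp [Matrix.fromBlocks_multiply]
    have p2 : Y.val * X.val = 0 := by
      rw [eX, eY]; simp [Matrix.fromBlocks_multiply]
    apply Subtype.ext
    show X.val * Y.val - Y.val * X.val = 0
    rw [p1, p2, sub_zero]
  · -- section
    refine ⟨{ toFun := fun p => ⟨Matrix.fromBlocks p.1 0 0 p.2.val, by
                rw [hmem]
                constructor
                · simp
                · simpa using p.2.2⟩
              map_add' := fun p q => Subtype.ext (by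
                show Matrix.fromBlocks (p.1 + q.1) 0 0 (p.2.val + q.2.val)
                    = Matrix.fromBlocks p.1 0 0 p.2.val + Matrix.fromBlocks q.1 0 0 q.2.val
                simp [Matrix.fromBlocks_add])
              map_smul' := fun c p => Subtype.ext (by
                show Matrix.fromBlocks (c • p.1) 0 0 (c • p.2.val)
                    = c • Matrix.fromBlocks p.1 0 0 p.2.val
                simp [Matrix.fromBlocks_smul])
              map_lie' := fun {p q} => Subtype.ext (by
                show Matrix.fromBlocks ⁅p.1, q.1⁆ 0 0 (p.2.val * q.2.val - q.2.val * p.2.val)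
                    = Matrix.fromBlocks p.1 0 0 p.2.val * Matrix.fromBlocks q.1 0 0 q.2.val
                      - Matrix.fromBlocks q.1 0 0 q.2.val * Matrix.fromBlocks p.1 0 0 p.2.val
                rw [Ring.lie_def]
                simp [Matrix.fromBlocks_multiply, Matrix.fromBlocks_neg, sub_eq_add_neg,
                  Matrix.fromBlocks_add]) }, ?_, ?_⟩
    · intro p; rfl
    · intro p
      refine Prod.ext rfl (Subtype.ext rfl)
end

section
/- Let k be a field with char k ≠ 2, d a positive integer, and M a nonzero d×d matrix over k. Then ō(M) is the internal direct sum of the Lie subalgebra o(M) and the one-dimensional central subalgebra k·I_d spanned by the identity matrix: every X ∈ ō(M) can be written uniquely as X = Y + λ·I_d with Y ∈ o(M) and λ ∈ k. Moreover the derived subalgebras coincide: [ō(M), ō(M)] = [o(M), o(M)]. -/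
open Matrix LieAlgebra

attribute [local instance 100] LieRing.ofAssociativeRing

/-- `ō(M)`: the space of matrices `X` with `Xᵀ * M + M * X` in the linear span of `M`. -/
def lieOBar (k : Type) [Field k] {ι : Type} [Fintype ι] [DecidableEq ι]
    (M : Matrix ι ι k) : Submodule k (Matrix ι ι k) where
  carrier := {X | ∃ c : k, Xᵀ * M + M * X = c • M}
  zero_mem' := ⟨0, by simp⟩
  add_mem' := by
    rintro X Y ⟨a, ha⟩ ⟨b, hb⟩
    exact ⟨a + b, by
      rw [Matrix.transpose_add, Matrix.add_mul, Matrix.mul_add, add_add_add_comm, ha, hb,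
        add_smul]⟩
  smul_mem' := by
    rintro c X ⟨a, ha⟩
    exact ⟨c * a, by
      rw [Matrix.transpose_smul, Matrix.smul_mul, Matrix.mul_smul, ← smul_add, ha, smul_smul]⟩

/-- Let `char k ≠ 2` and `M ≠ 0` a `d × d` matrix.  Then `ō(M)` is the
internal direct sum of `o(M)` and the line spanned by the identity matrix: every
`X ∈ ō(M)` is uniquely `Y + c • 1` with `Y ∈ o(M)` and `c ∈ k` (and conversely every such
sum lies in `ō(M)`).  Moreover the derived subalgebras (spans of brackets) coincide:
`[ō(M), ō(M)] = [o(M), o(M)]`. -/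
theorem lieOBar_eq_lieO_sup_scalar_of_charNeTwo (k : Type) [Field k] (hchar : ringChar k ≠ 2)
    (d : ℕ) (hd : 0 < d) (M : Matrix (Fin d) (Fin d) k) (hM : M ≠ 0) :
    (∀ Y ∈ lieO k M, ∀ c : k, Y + c • (1 : Matrix (Fin d) (Fin d) k) ∈ lieOBar k M) ∧
    (∀ X ∈ lieOBar k M, ∃! p : Matrix (Fin d) (Fin d) k × k,
        p.1 ∈ lieO k M ∧ X = p.1 + p.2 • (1 : Matrix (Fin d) (Fin d) k)) ∧
    Submodule.span k {z : Matrix (Fin d) (Fin d) k |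
        ∃ X ∈ lieOBar k M, ∃ Y ∈ lieOBar k M, z = ⁅X, Y⁆} =
      Submodule.span k {z : Matrix (Fin d) (Fin d) k |
        ∃ X ∈ lieO k M, ∃ Y ∈ lieO k M, z = ⁅X, Y⁆} := by
  have h2 : (2:k) ≠ 0 := Ring.two_ne_zero hchar
  have memO : ∀ X : Matrix (Fin d) (Fin d) k, X ∈ lieO k M ↔ Xᵀ * M + M * X = 0 :=
    fun X => Iff.rfl
  have key : ∀ (Y : Matrix (Fin d) (Fin d) k) (c : k),
      (Y + c • 1)ᵀ * M + M * (Y + c • 1) = (Yᵀ * M + M * Y) + (2 * c) • M := by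
    intro Y c
    simp only [Matrix.transpose_add, Matrix.transpose_smul, Matrix.transpose_one,
      Matrix.add_mul, Matrix.mul_add, Matrix.smul_mul, Matrix.mul_smul, one_mul, mul_one,
      two_mul, add_smul]
    abel
  have subO : ∀ (X : Matrix (Fin d) (Fin d) k) (c : k), Xᵀ * M + M * X = c • M →
      X - (c / 2) • 1 ∈ lieO k M := by
    intro X c hc
    rw [memO]
    have hk := key (X - (c / 2) • 1) (c / 2)
    rw [sub_add_cancel, hc, mul_div_cancel₀ c h2] at hk
    exact (right_eq_add.mp hk)
  refine ⟨?_, ?_, ?_⟩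
  · intro Y hY c
    exact ⟨2 * c, by rw [key Y c, (memO Y).mp hY, zero_add]⟩
  · rintro X ⟨c, hc⟩
    refine ⟨(X - (c / 2) • 1, c / 2), ⟨subO X c hc, (sub_add_cancel X ((c/2) • 1)).symm⟩, ?_⟩
    rintro ⟨Y', c'⟩ ⟨hY', hXeq⟩
    have hc' : 2 * c' = c := by
      have hk := key Y' c'
      rw [← hXeq, (memO Y').mp hY', zero_add, hc] at hk
      have h0 : (c - 2 * c') • M = 0 := by rw [sub_smul, hk, sub_self]
      rcases smul_eq_zero.mp h0 with h | h
      · exact (sub_eq_zero.mp h).symm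
      · exact absurd h hM
    have hc2 : c' = c / 2 := by rw [eq_div_iff h2, mul_comm]; exact hc'
    have hY2 : Y' = X - (c / 2) • 1 := by rw [← hc2, hXeq]; abel
    simp [hY2, hc2]
  · congr 1
    ext z
    simp only [Set.mem_setOf_eq]
    constructor
    · rintro ⟨X, ⟨a, ha⟩, Y, ⟨b, hb⟩, rfl⟩
      refine ⟨X - (a / 2) • 1, subO X a ha, Y - (b / 2) • 1, subO Y b hb, ?_⟩
      simp only [Ring.lie_def, Matrix.sub_mul, Matrix.mul_sub, Matrix.smul_mul,
        Matrix.mul_smul, one_mul, mul_one, smul_sub, smul_smul]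
      module
    · rintro ⟨X, hX, Y, hY, rfl⟩
      exact ⟨X, ⟨0, by rw [(memO X).mp hX, zero_smul]⟩,
        Y, ⟨0, by rw [(memO Y).mp hY, zero_smul]⟩, rfl⟩
end

section
/- Let k be a field with char k = 2, let m ≥ 0 and n ≥ 1 be integers, and set M = 0_m ⊕ Π_{2n}, a square matrix of size d = m+2n. Let X₀ be the block-diagonal d×d matrix with blocks 0_{m+n} and I_n. Then X₀ᵀ·M + M·X₀ = M, so X₀ ∈ ō(M) but X₀ ∉ o(M), and ō(M) is the internal direct sum of o(M) and the one-dimensional subspace k·X₀; in particular o(M) has codimension one in ō(M). -/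
open Matrix LieAlgebra

attribute [local instance 100] LieRing.ofAssociativeRing

/-- Let `char k = 2`, `m ≥ 0`, `n ≥ 1` and `M = 0ₘ ⊕ Π₂ₙ` with
`Π₂ₙ = [[0, 1], [-1, 0]]`.  Let `X₀` be the block-diagonal matrix with blocks `0_{m+n}`
and `1ₙ`.  Then `X₀ᵀ M + M X₀ = M`, so `X₀ ∈ ō(M)` and `X₀ ∉ o(M)`; moreover `ō(M)` is
the internal direct sum of `o(M)` and the line `k • X₀`; in particular `o(M)` has
codimension one in `ō(M)`. -/
theorem lieOBar_symplectic_of_charTwo (k : Type) [Field k] [CharP k 2] (m n : ℕ) (hn : 0 < n) :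
    ∀ M : Matrix (Fin m ⊕ (Fin n ⊕ Fin n)) (Fin m ⊕ (Fin n ⊕ Fin n)) k,
      M = Matrix.fromBlocks 0 0 0 (Matrix.fromBlocks 0 1 (-1) 0) →
    ∀ X₀ : Matrix (Fin m ⊕ (Fin n ⊕ Fin n)) (Fin m ⊕ (Fin n ⊕ Fin n)) k,
      X₀ = Matrix.fromBlocks 0 0 0 (Matrix.fromBlocks 0 0 0 1) →
      X₀ᵀ * M + M * X₀ = M ∧
      X₀ ∈ lieOBar k M ∧
      X₀ ∉ lieO k M ∧
      (∀ Y ∈ lieO k M, ∀ c : k, Y + c • X₀ ∈ lieOBar k M) ∧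
      (∀ X ∈ lieOBar k M, ∃! p : Matrix (Fin m ⊕ (Fin n ⊕ Fin n)) (Fin m ⊕ (Fin n ⊕ Fin n)) k × k,
          p.1 ∈ lieO k M ∧ X = p.1 + p.2 • X₀) := by
  intro M hM X₀ hX₀
  have hkey : X₀ᵀ * M + M * X₀ = M := by
    subst hM hX₀
    simp [Matrix.fromBlocks_transpose, Matrix.fromBlocks_multiply, Matrix.fromBlocks_add]
  have hMentry : M (Sum.inr (Sum.inl ⟨0, hn⟩)) (Sum.inr (Sum.inr ⟨0, hn⟩)) = 1 := by
    subst hM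
    simp [Matrix.fromBlocks, Matrix.one_apply]
  have hinj : ∀ a b : k, a • M = b • M → a = b := by
    intro a b h
    have := congrFun (congrFun h (Sum.inr (Sum.inl ⟨0, hn⟩))) (Sum.inr (Sum.inr ⟨0, hn⟩))
    simpa [Matrix.smul_apply, hMentry] using this
  have hMne : M ≠ 0 := by
    intro h
    have := congrFun (congrFun h (Sum.inr (Sum.inl ⟨0, hn⟩))) (Sum.inr (Sum.inr ⟨0, hn⟩))
    rw [hMentry] at this
    exact one_ne_zero this
  refine ⟨hkey, ⟨1, by simpa using hkey⟩, ?_, ?_, ?_⟩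
  · intro h
    have h' : X₀ᵀ * M + M * X₀ = 0 := h
    rw [hkey] at h'
    exact hMne h'
  · rintro Y hY c
    have hY' : Yᵀ * M + M * Y = 0 := hY
    refine ⟨c, ?_⟩
    rw [Matrix.transpose_add, Matrix.transpose_smul, Matrix.add_mul, Matrix.mul_add,
      Matrix.smul_mul, Matrix.mul_smul, add_add_add_comm, hY', ← smul_add, hkey, zero_add]
  · rintro X ⟨c, hc⟩
    refine ⟨(X - c • X₀, c), ⟨?_, by module⟩, ?_⟩
    · show (X - c • X₀)ᵀ * M + M * (X - c • X₀) = 0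
      rw [Matrix.transpose_sub, Matrix.transpose_smul, Matrix.sub_mul, Matrix.mul_sub,
        Matrix.smul_mul, Matrix.mul_smul, sub_add_sub_comm, hc, ← smul_add, hkey, sub_self]
    · rintro ⟨Y, a⟩ ⟨hY, hXd⟩
      have hY' : Yᵀ * M + M * Y = 0 := hY
      have hXc : Xᵀ * M + M * X = a • M := by
        rw [hXd, Matrix.transpose_add, Matrix.transpose_smul, Matrix.add_mul, Matrix.mul_add,
          Matrix.smul_mul, Matrix.mul_smul, add_add_add_comm, hY', ← smul_add, hkey, zero_add]
      have hac : a = c := hinj a c (hXc ▸ hc)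
      have : Y = X - c • X₀ := by
        rw [hXd, hac]; abel
      simp [Prod.ext_iff, this, hac]
end

section
/- Let k be a field with char k = 2, m,n ≥ 1 integers, D an invertible diagonal n×n matrix over k, and M = 0_m ⊕ D. Then the Lie algebra o(M) is solvable if and only if m ≤ 2 and n ≤ 2. -/
open Matrix LieAlgebra Sum

attribute [local instance 100] LieRing.ofAssociativeRing

section helpers

lemma sum_pair_of {k : Type} [Field k] {α : Type} [Fintype α] [DecidableEq α] {i j : α}
    (h : i ≠ j) (f : α → k)
    (hf : ∀ l, l ≠ i → l ≠ j → f l = 0) : ∑ l, f l = f i + f j := by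
  rw [← Finset.sum_subset (Finset.subset_univ ({i, j} : Finset α))
    (fun x _ hx => by
      simp only [Finset.mem_insert, Finset.mem_singleton, not_or] at hx
      exact hf x hx.1 hx.2)]
  exact Finset.sum_pair h

lemma fin_eq_or {m : ℕ} (hm : m ≤ 2) {i j : Fin m} (l : Fin m) (hij : i ≠ j) : l = i ∨ l = j := by
  have hi := i.isLt; have hj := j.isLt; have hl := l.isLt
  simp only [Fin.ext_iff] at hij ⊢
  omega

lemma lie_matrix_apply {k : Type} [Field k] {ι : Type} [Fintype ι] (X Y : Matrix ι ι k) (a b : ι) :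
    ⁅X, Y⁆ a b = ∑ c, (X a c * Y c b - Y a c * X c b) := by
  simp [Ring.lie_def, Matrix.sub_apply, Matrix.mul_apply, Finset.sum_sub_distrib]

end helpers


section std
variable {k : Type} [Field k] {ι : Type} [Fintype ι] [DecidableEq ι]

lemma transpose_std (i j : ι) (c : k) :
    (single i j c)ᵀ = single j i c := by
  ext a b
  simp only [Matrix.transpose_apply, Matrix.single, Matrix.of_apply]
  by_cases h1 : i = b <;> by_cases h2 : j = a <;> simp [h1, h2]

lemma std_mul_diag (i j : ι) (c : k) (d : ι → k) :
    single i j c * diagonal d = single i j (c * d j) := by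
  ext a b
  rw [Matrix.mul_diagonal]
  simp only [Matrix.single, Matrix.of_apply]
  by_cases h1 : i = a <;> by_cases h2 : j = b <;> simp [h1, h2]

lemma diag_mul_std (i j : ι) (c : k) (d : ι → k) :
    diagonal d * single i j c = single i j (d i * c) := by
  ext a b
  rw [Matrix.diagonal_mul]
  simp only [Matrix.single, Matrix.of_apply]
  by_cases h1 : i = a <;> by_cases h2 : j = b <;> simp [h1, h2]

/-- the basic bracket computation for "symmetrized" matrix units -/
lemma lie_T {a b c : ι} (hab : a ≠ b) (hbc : b ≠ c) (hac : a ≠ c) (u v u' v' : k) :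
    ⁅(single a b u + single b a v : Matrix ι ι k),
      single b c u' + single c b v'⁆ =
      single a c (u * u') - single c a (v' * v) := by
  simp only [Ring.lie_def, Matrix.add_mul, Matrix.mul_add,
    Matrix.single_mul_single_same,
    Matrix.single_mul_single_of_ne _ _ _ _ hbc,
    Matrix.single_mul_single_of_ne _ _ _ _ hab,
    Matrix.single_mul_single_of_ne _ _ _ _ hac,
    Matrix.single_mul_single_of_ne _ _ _ _ hab.symm,
    Matrix.single_mul_single_of_ne _ _ _ _ hbc.symm,
    Matrix.single_mul_single_of_ne _ _ _ _ hac.symm]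
  abel

end std

section main
variable {k : Type} [Field k] [CharP k 2] {m n : ℕ} {D : Fin n → k}

local notation "MM" => (Matrix.fromBlocks 0 0 0 (Matrix.diagonal D) :
  Matrix (Fin m ⊕ Fin n) (Fin m ⊕ Fin n) k)

omit [CharP k 2] in
lemma entry_eq {X : Matrix (Fin m ⊕ Fin n) (Fin m ⊕ Fin n) k}
    (hX : Xᵀ * MM + MM * X = 0) :
    (∀ i j, X (inr i) (inl j) * D i = 0) ∧
    (∀ i j, X (inr j) (inr i) * D j + D i * X (inr i) (inr j) = 0) := by
  constructor
  · intro i j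
    have h := congrFun (congrFun hX (inr i)) (inl j)
    simpa [Matrix.add_apply, Matrix.mul_apply, Fintype.sum_sum_type, Matrix.fromBlocks_apply₁₁,
      Matrix.fromBlocks_apply₁₂, Matrix.fromBlocks_apply₂₁, Matrix.fromBlocks_apply₂₂,
      Matrix.diagonal_apply, Finset.mul_sum, mul_comm] using h
  · intro i j
    have h := congrFun (congrFun hX (inr i)) (inr j)
    simpa [Matrix.add_apply, Matrix.mul_apply, Fintype.sum_sum_type, Matrix.fromBlocks_apply₁₁,
      Matrix.fromBlocks_apply₁₂, Matrix.fromBlocks_apply₂₁, Matrix.fromBlocks_apply₂₂,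
      Matrix.diagonal_apply] using h

variable (hD : ∀ i, D i ≠ 0)

omit [CharP k 2] in
include hD in
lemma hC_of_mem {X : Matrix (Fin m ⊕ Fin n) (Fin m ⊕ Fin n) k}
    (hX : X ∈ lieO k MM) : ∀ i j, X (inr i) (inl j) = 0 := by
  intro i j
  have h := (entry_eq hX).1 i j
  exact (mul_eq_zero.mp h).resolve_right (hD i)

lemma hE_of_mem {X : Matrix (Fin m ⊕ Fin n) (Fin m ⊕ Fin n) k}
    (hX : X ∈ lieO k MM) : ∀ i j, D i * X (inr i) (inr j) = D j * X (inr j) (inr i) := by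
  intro i j
  have h := (entry_eq hX).2 i j
  have h2 : (2 : k) = 0 := CharTwo.two_eq_zero
  linear_combination h - X (inr j) (inr i) * D j * h2 + mul_comm (X (inr j) (inr i)) (D j)

omit [CharP k 2] in
include hD in
/-- bracket entry in the top-left block -/
lemma lie_ll {X Y : Matrix (Fin m ⊕ Fin n) (Fin m ⊕ Fin n) k}
    (hX : X ∈ lieO k MM) (hY : Y ∈ lieO k MM) (i j : Fin m) :
    ⁅X, Y⁆ (inl i) (inl j) =
      ∑ l, (X (inl i) (inl l) * Y (inl l) (inl j) - Y (inl i) (inl l) * X (inl l) (inl j)) := by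
  rw [lie_matrix_apply, Fintype.sum_sum_type]
  have h1 : ∀ l : Fin n,
      X (inl i) (inr l) * Y (inr l) (inl j) - Y (inl i) (inr l) * X (inr l) (inl j) = 0 := by
    intro l
    rw [hC_of_mem hD hX, hC_of_mem hD hY, mul_zero, mul_zero, sub_zero]
  rw [Finset.sum_congr rfl (fun l _ => h1 l), Finset.sum_const_zero, add_zero]

omit [CharP k 2] in
include hD in
/-- bracket entry in the bottom-right block -/
lemma lie_rr {X Y : Matrix (Fin m ⊕ Fin n) (Fin m ⊕ Fin n) k}
    (hX : X ∈ lieO k MM) (hY : Y ∈ lieO k MM) (i j : Fin n) :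
    ⁅X, Y⁆ (inr i) (inr j) =
      ∑ l, (X (inr i) (inr l) * Y (inr l) (inr j) - Y (inr i) (inr l) * X (inr l) (inr j)) := by
  rw [lie_matrix_apply, Fintype.sum_sum_type]
  have h1 : ∀ l : Fin m,
      X (inr i) (inl l) * Y (inl l) (inr j) - Y (inr i) (inl l) * X (inl l) (inr j) = 0 := by
    intro l
    rw [hC_of_mem hD hX, hC_of_mem hD hY, zero_mul, zero_mul, sub_zero]
  rw [Finset.sum_congr rfl (fun l _ => h1 l), Finset.sum_const_zero, zero_add]

include hD in
lemma lie_trace_zero {X Y : Matrix (Fin m ⊕ Fin n) (Fin m ⊕ Fin n) k}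
    (hX : X ∈ lieO k MM) (hY : Y ∈ lieO k MM) :
    ∑ i, ⁅X, Y⁆ (inl i) (inl i) = 0 := by
  rw [Finset.sum_congr rfl fun i _ => lie_ll hD hX hY i i]
  simp only [Finset.sum_sub_distrib]
  rw [sub_eq_zero, Finset.sum_comm]
  exact Finset.sum_congr rfl fun l _ => Finset.sum_congr rfl fun i _ => mul_comm _ _

include hD in
lemma lie_rr_diag_zero {X Y : Matrix (Fin m ⊕ Fin n) (Fin m ⊕ Fin n) k}
    (hX : X ∈ lieO k MM) (hY : Y ∈ lieO k MM) (i : Fin n) :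
    ⁅X, Y⁆ (inr i) (inr i) = 0 := by
  rw [lie_rr hD hX hY i i]
  apply Finset.sum_eq_zero
  intro l _
  have h1 := hE_of_mem hX i l
  have h2 := hE_of_mem hY i l
  have key : D i * (X (inr i) (inr l) * Y (inr l) (inr i) -
      Y (inr i) (inr l) * X (inr l) (inr i)) = 0 := by
    linear_combination Y (inr l) (inr i) * h1 - X (inr l) (inr i) * h2
  rcases mul_eq_zero.mp key with h | h
  · exact absurd h (hD i)
  · exact h

/-- condition cutting out the first term of our solvable chain -/
def P1 (X : Matrix (Fin m ⊕ Fin n) (Fin m ⊕ Fin n) k) : Prop :=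
  (∑ i, X (inl i) (inl i)) = 0 ∧ ∀ i, X (inr i) (inr i) = 0

/-- condition cutting out the second term of our solvable chain -/
def P2 (X : Matrix (Fin m ⊕ Fin n) (Fin m ⊕ Fin n) k) : Prop :=
  (∀ i j : Fin m, i ≠ j → X (inl i) (inl j) = 0) ∧
    (∀ i j : Fin m, X (inl i) (inl i) = X (inl j) (inl j)) ∧
    ∀ i j : Fin n, X (inr i) (inr j) = 0

/-- condition cutting out the third term of our solvable chain -/
def P3 (X : Matrix (Fin m ⊕ Fin n) (Fin m ⊕ Fin n) k) : Prop :=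
  (∀ i j : Fin m, X (inl i) (inl j) = 0) ∧ ∀ i j : Fin n, X (inr i) (inr j) = 0

include hD in
lemma lie_P1 (hm : m ≤ 2) (hn : n ≤ 2) {X Y : Matrix (Fin m ⊕ Fin n) (Fin m ⊕ Fin n) k}
    (hX : X ∈ lieO k MM) (hY : Y ∈ lieO k MM) (h1 : P1 X) (h2 : P1 Y) : P2 ⁅X, Y⁆ := by
  have htwo : (2 : k) = 0 := CharTwo.two_eq_zero
  refine ⟨?_, ?_, ?_⟩
  · intro i j hij
    rw [lie_ll hD hX hY,
      sum_pair_of hij _ (fun l hli hlj => ((fin_eq_or hm l hij).elim (absurd · hli) (absurd · hlj)))]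
    have hA : X (inl i) (inl i) + X (inl j) (inl j) = 0 := by
      rw [← h1.1, sum_pair_of hij _
        (fun l hli hlj => ((fin_eq_or hm l hij).elim (absurd · hli) (absurd · hlj)))]
    have hB : Y (inl i) (inl i) + Y (inl j) (inl j) = 0 := by
      rw [← h2.1, sum_pair_of hij _
        (fun l hli hlj => ((fin_eq_or hm l hij).elim (absurd · hli) (absurd · hlj)))]
    linear_combination Y (inl i) (inl j) * hA - X (inl i) (inl j) * hB +
      (X (inl i) (inl j) * Y (inl j) (inl j) - Y (inl i) (inl j) * X (inl j) (inl j)) * htwo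
  · intro i j
    by_cases hij : i = j
    · rw [hij]
    · rw [lie_ll hD hX hY i i, lie_ll hD hX hY j j,
        sum_pair_of hij _ (fun l hli hlj => ((fin_eq_or hm l hij).elim (absurd · hli) (absurd · hlj))),
        sum_pair_of hij _ (fun l hli hlj => ((fin_eq_or hm l hij).elim (absurd · hli) (absurd · hlj)))]
      linear_combination (X (inl i) (inl j) * Y (inl j) (inl i) -
        Y (inl i) (inl j) * X (inl j) (inl i)) * htwo
  · intro i j
    by_cases hij : i = j
    · rw [hij]; exact lie_rr_diag_zero hD hX hY j
    · rw [lie_rr hD hX hY,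
        sum_pair_of hij _ (fun l hli hlj => ((fin_eq_or hn l hij).elim (absurd · hli) (absurd · hlj)))]
      rw [h1.2 i, h1.2 j, h2.2 i, h2.2 j]
      ring

include hD in
lemma lie_P2 {X Y : Matrix (Fin m ⊕ Fin n) (Fin m ⊕ Fin n) k}
    (hX : X ∈ lieO k MM) (hY : Y ∈ lieO k MM) (h2 : P2 Y) : P3 ⁅X, Y⁆ := by
  constructor
  · intro i j
    rw [lie_ll hD hX hY]
    by_cases hij : i = j
    · subst hij
      apply Finset.sum_eq_zero
      intro l _
      by_cases hl : l = i
      · subst hl; ring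
      · rw [h2.1 l i hl, h2.1 i l (fun h => hl h.symm), mul_zero, zero_mul, sub_zero]
    · have e1 : ∑ l, X (inl i) (inl l) * Y (inl l) (inl j) =
          X (inl i) (inl j) * Y (inl j) (inl j) :=
        Finset.sum_eq_single j (fun l _ hl => by rw [h2.1 l j hl, mul_zero])
          (fun h => absurd (Finset.mem_univ j) h)
      have e2 : ∑ l, Y (inl i) (inl l) * X (inl l) (inl j) =
          Y (inl i) (inl i) * X (inl i) (inl j) :=
        Finset.sum_eq_single i (fun l _ hl => by rw [h2.1 i l (fun h => hl h.symm), zero_mul])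
          (fun h => absurd (Finset.mem_univ i) h)
      rw [Finset.sum_sub_distrib, e1, e2, h2.2.1 i j, mul_comm]
      ring
  · intro i j
    rw [lie_rr hD hX hY]
    apply Finset.sum_eq_zero
    intro l _
    rw [h2.2.2 l j, h2.2.2 i l, mul_zero, zero_mul, sub_zero]

include hD in
lemma lie_P3 {X Y : Matrix (Fin m ⊕ Fin n) (Fin m ⊕ Fin n) k}
    (hX : X ∈ lieO k MM) (hY : Y ∈ lieO k MM) (h3X : P3 X) (h3Y : P3 Y) : ⁅X, Y⁆ = 0 := by
  ext a b
  rw [lie_matrix_apply, Matrix.zero_apply]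
  apply Finset.sum_eq_zero
  rintro (l | l) _ <;> rcases a with i | i <;> rcases b with j | j <;>
    simp only [h3X.1, h3X.2, h3Y.1, h3Y.2, hC_of_mem hD hX, hC_of_mem hD hY,
      mul_zero, zero_mul, sub_zero]


omit [CharP k 2] in
lemma P1_add {X Y : Matrix (Fin m ⊕ Fin n) (Fin m ⊕ Fin n) k} (hX : P1 X) (hY : P1 Y) :
    P1 (X + Y) := by
  refine ⟨?_, fun i => ?_⟩
  · simp only [Matrix.add_apply, Finset.sum_add_distrib, hX.1, hY.1, add_zero]
  · simp [Matrix.add_apply, hX.2 i, hY.2 i]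

omit [CharP k 2] in
lemma P1_smul (c : k) {X : Matrix (Fin m ⊕ Fin n) (Fin m ⊕ Fin n) k} (hX : P1 X) :
    P1 (c • X) := by
  refine ⟨?_, fun i => ?_⟩
  · simp only [Matrix.smul_apply, ← Finset.smul_sum, hX.1, smul_zero]
  · simp [Matrix.smul_apply, hX.2 i]

omit [CharP k 2] in
lemma P2_add {X Y : Matrix (Fin m ⊕ Fin n) (Fin m ⊕ Fin n) k} (hX : P2 X) (hY : P2 Y) :
    P2 (X + Y) := by
  refine ⟨fun i j hij => ?_, fun i j => ?_, fun i j => ?_⟩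
  · simp [Matrix.add_apply, hX.1 i j hij, hY.1 i j hij]
  · simp [Matrix.add_apply, hX.2.1 i j, hY.2.1 i j]
  · simp [Matrix.add_apply, hX.2.2 i j, hY.2.2 i j]

omit [CharP k 2] in
lemma P2_smul (c : k) {X : Matrix (Fin m ⊕ Fin n) (Fin m ⊕ Fin n) k} (hX : P2 X) :
    P2 (c • X) := by
  refine ⟨fun i j hij => ?_, fun i j => ?_, fun i j => ?_⟩
  · simp [Matrix.smul_apply, hX.1 i j hij]
  · simp [Matrix.smul_apply, hX.2.1 i j]
  · simp [Matrix.smul_apply, hX.2.2 i j]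

omit [CharP k 2] in
lemma P3_add {X Y : Matrix (Fin m ⊕ Fin n) (Fin m ⊕ Fin n) k} (hX : P3 X) (hY : P3 Y) :
    P3 (X + Y) := by
  refine ⟨fun i j => ?_, fun i j => ?_⟩
  · simp [Matrix.add_apply, hX.1 i j, hY.1 i j]
  · simp [Matrix.add_apply, hX.2 i j, hY.2 i j]

omit [CharP k 2] in
lemma P3_smul (c : k) {X : Matrix (Fin m ⊕ Fin n) (Fin m ⊕ Fin n) k} (hX : P3 X) :
    P3 (c • X) := by
  refine ⟨fun i j => ?_, fun i j => ?_⟩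
  · simp [Matrix.smul_apply, hX.1 i j]
  · simp [Matrix.smul_apply, hX.2 i j]

omit [CharP k 2] in
lemma P3_P2 {X : Matrix (Fin m ⊕ Fin n) (Fin m ⊕ Fin n) k} (hX : P3 X) : P2 X :=
  ⟨fun i j _ => hX.1 i j, fun i j => by rw [hX.1 i i, hX.1 j j], hX.2⟩

omit [CharP k 2] in
lemma P1_zero : P1 (0 : Matrix (Fin m ⊕ Fin n) (Fin m ⊕ Fin n) k) := by
  constructor <;> simp

omit [CharP k 2] in
lemma P2_zero : P2 (0 : Matrix (Fin m ⊕ Fin n) (Fin m ⊕ Fin n) k) := by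
  refine ⟨?_, ?_, ?_⟩ <;> simp

omit [CharP k 2] in
lemma P3_zero : P3 (0 : Matrix (Fin m ⊕ Fin n) (Fin m ⊕ Fin n) k) := by
  constructor <;> simp

include hD in
/-- The first ideal in the chain. -/
def Id1 : LieIdeal k ↥(lieO k MM) where
  carrier := {x | P1 (x : Matrix (Fin m ⊕ Fin n) (Fin m ⊕ Fin n) k)}
  zero_mem' := P1_zero
  add_mem' := fun hx hy => P1_add hx hy
  smul_mem' := fun c x hx => P1_smul c hx
  lie_mem := fun {x y} _ => by
    rw [Set.mem_setOf_eq, LieSubalgebra.coe_bracket]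
    exact ⟨lie_trace_zero hD x.2 y.2, fun i => lie_rr_diag_zero hD x.2 y.2 i⟩

include hD in
/-- The second ideal in the chain. -/
def Id2 : LieIdeal k ↥(lieO k MM) where
  carrier := {x | P2 (x : Matrix (Fin m ⊕ Fin n) (Fin m ⊕ Fin n) k)}
  zero_mem' := P2_zero
  add_mem' := fun hx hy => P2_add hx hy
  smul_mem' := fun c x hx => P2_smul c hx
  lie_mem := fun {x y} hy => by
    rw [Set.mem_setOf_eq, LieSubalgebra.coe_bracket]
    exact P3_P2 (lie_P2 hD x.2 y.2 hy)

include hD in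
/-- The third ideal in the chain. -/
def Id3 : LieIdeal k ↥(lieO k MM) where
  carrier := {x | P3 (x : Matrix (Fin m ⊕ Fin n) (Fin m ⊕ Fin n) k)}
  zero_mem' := P3_zero
  add_mem' := fun hx hy => P3_add hx hy
  smul_mem' := fun c x hx => P3_smul c hx
  lie_mem := fun {x y} hy => by
    rw [Set.mem_setOf_eq, LieSubalgebra.coe_bracket]
    exact lie_P2 hD x.2 y.2 (P3_P2 hy)

include hD in
lemma solvable_of_le (hm : m ≤ 2) (hn : n ≤ 2) :
    LieAlgebra.IsSolvable ↥(lieO k MM) := by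
  have hsucc : ∀ s, LieAlgebra.derivedSeries k ↥(lieO k MM) (s + 1) =
      ⁅LieAlgebra.derivedSeries k ↥(lieO k MM) s, LieAlgebra.derivedSeries k ↥(lieO k MM) s⁆ :=
    fun s => LieAlgebra.derivedSeriesOfIdeal_succ k ↥(lieO k MM) ⊤ s
  have h1 : LieAlgebra.derivedSeries k ↥(lieO k MM) 1 ≤ Id1 hD := by
    rw [hsucc 0]
    rw [LieSubmodule.lie_le_iff]
    intro x _ y _
    show P1 _
    rw [LieSubalgebra.coe_bracket]
    exact ⟨lie_trace_zero hD x.2 y.2, fun i => lie_rr_diag_zero hD x.2 y.2 i⟩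
  have h2 : LieAlgebra.derivedSeries k ↥(lieO k MM) 2 ≤ Id2 hD := by
    rw [hsucc 1]
    refine le_trans (LieSubmodule.mono_lie h1 h1) ?_
    rw [LieSubmodule.lie_le_iff]
    intro x hx y hy
    show P2 _
    rw [LieSubalgebra.coe_bracket]
    exact lie_P1 hD hm hn x.2 y.2 hx hy
  have h3 : LieAlgebra.derivedSeries k ↥(lieO k MM) 3 ≤ Id3 hD := by
    rw [hsucc 2]
    refine le_trans (LieSubmodule.mono_lie h2 h2) ?_
    rw [LieSubmodule.lie_le_iff]
    intro x _ y hy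
    show P3 _
    rw [LieSubalgebra.coe_bracket]
    exact lie_P2 hD x.2 y.2 hy
  refine (LieAlgebra.isSolvable_iff (R := k) (L := _)).mpr ⟨4, ?_⟩
  rw [eq_bot_iff, hsucc 3]
  refine le_trans (LieSubmodule.mono_lie h3 h3) ?_
  rw [LieSubmodule.lie_le_iff]
  intro x hx y hy
  rw [LieSubmodule.mem_bot]
  apply Subtype.ext
  rw [LieSubalgebra.coe_bracket, ZeroMemClass.coe_zero]
  exact lie_P3 hD x.2 y.2 hx hy

end main


section blocks
variable {k : Type} [Field k] [CharP k 2] {m n : ℕ} {D : Fin n → k}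

local notation "MM" => (Matrix.fromBlocks 0 0 0 (Matrix.diagonal D) :
  Matrix (Fin m ⊕ Fin n) (Fin m ⊕ Fin n) k)

omit [CharP k 2] in
lemma mem_lieO_blocks (A : Matrix (Fin m) (Fin m) k) (B : Matrix (Fin m) (Fin n) k)
    (E : Matrix (Fin n) (Fin n) k) (hE : Eᵀ * Matrix.diagonal D + Matrix.diagonal D * E = 0) :
    Matrix.fromBlocks A B 0 E ∈ lieO k MM := by
  show _ᵀ * _ + _ * _ = 0
  rw [Matrix.fromBlocks_transpose, Matrix.fromBlocks_multiply, Matrix.fromBlocks_multiply,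
    Matrix.fromBlocks_add]
  simp [hE]

omit [CharP k 2] in
lemma lie_blocks_ll (A A' : Matrix (Fin m) (Fin m) k) :
    ⁅(Matrix.fromBlocks A 0 0 0 : Matrix (Fin m ⊕ Fin n) (Fin m ⊕ Fin n) k),
      (Matrix.fromBlocks A' 0 0 0 : Matrix (Fin m ⊕ Fin n) (Fin m ⊕ Fin n) k)⁆ =
      Matrix.fromBlocks ⁅A, A'⁆ 0 0 0 := by
  simp [Ring.lie_def, Matrix.fromBlocks_multiply, sub_eq_add_neg, Matrix.fromBlocks_neg,
    Matrix.fromBlocks_add]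

omit [CharP k 2] in
lemma lie_blocks_rr (E E' : Matrix (Fin n) (Fin n) k) :
    ⁅(Matrix.fromBlocks 0 0 0 E : Matrix (Fin m ⊕ Fin n) (Fin m ⊕ Fin n) k),
      (Matrix.fromBlocks 0 0 0 E' : Matrix (Fin m ⊕ Fin n) (Fin m ⊕ Fin n) k)⁆ =
      Matrix.fromBlocks 0 0 0 ⁅E, E'⁆ := by
  simp [Ring.lie_def, Matrix.fromBlocks_multiply, sub_eq_add_neg, Matrix.fromBlocks_neg,
    Matrix.fromBlocks_add]

lemma hE_F (i j : Fin n) :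
    (single i j (D j) + single j i (D i))ᵀ * Matrix.diagonal D +
      Matrix.diagonal D * (single i j (D j) + single j i (D i)) = 0 := by
  rw [Matrix.transpose_add, transpose_std, transpose_std, Matrix.add_mul, Matrix.mul_add,
    std_mul_diag, std_mul_diag, diag_mul_std, diag_mul_std]
  have h4 : ∀ (a b : Fin n) (c : k), single a b c + single a b c = 0 := by
    intro a b c
    rw [← Matrix.single_add, CharTwo.add_self_eq_zero]
    ext x y
    simp [Matrix.single]
  calc single j i (D j * D i) + single i j (D i * D j) +
        (single i j (D i * D j) + single j i (D j * D i)) =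
      (single j i (D j * D i) + single j i (D j * D i)) +
        (single i j (D i * D j) + single i j (D i * D j)) := by abel
    _ = 0 := by rw [h4, h4, add_zero]
end blocks

section triple
variable {K : Type} [Field K] {L : Type} [LieRing L] [LieAlgebra K L]

lemma triple_not_solvable (x0 x1 x2 : L) (c0 c1 c2 : K) (h0 : c0 ≠ 0) (h1 : c1 ≠ 0)
    (h2 : c2 ≠ 0) (e01 : ⁅x0, x1⁆ = c2 • x2) (e12 : ⁅x1, x2⁆ = c0 • x0)
    (e20 : ⁅x2, x0⁆ = c1 • x1) (hx : x0 ≠ 0) : ¬ LieAlgebra.IsSolvable L := by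
  intro hs
  obtain ⟨N, hN⟩ := (LieAlgebra.isSolvable_iff (R := K) (L := L)).mp hs
  have key : ∀ s, x0 ∈ LieAlgebra.derivedSeries K L s ∧ x1 ∈ LieAlgebra.derivedSeries K L s ∧
      x2 ∈ LieAlgebra.derivedSeries K L s := by
    intro s
    induction s with
    | zero => exact ⟨LieSubmodule.mem_top _, LieSubmodule.mem_top _, LieSubmodule.mem_top _⟩
    | succ s ih =>
      obtain ⟨m0, m1, m2⟩ := ih
      have hsucc : LieAlgebra.derivedSeries K L (s + 1) =
          ⁅LieAlgebra.derivedSeries K L s, LieAlgebra.derivedSeries K L s⁆ :=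
        LieAlgebra.derivedSeriesOfIdeal_succ K L ⊤ s
      have gen : ∀ (a b x : L) (c : K), c ≠ 0 → ⁅a, b⁆ = c • x →
          a ∈ LieAlgebra.derivedSeries K L s → b ∈ LieAlgebra.derivedSeries K L s →
          x ∈ LieAlgebra.derivedSeries K L (s + 1) := by
        intro a b x c hc he ha hb
        have hmem : ⁅a, b⁆ ∈ LieAlgebra.derivedSeries K L (s + 1) := by
          rw [hsucc]; exact LieSubmodule.lie_mem_lie ha hb
        rw [he] at hmem
        have := (LieAlgebra.derivedSeries K L (s + 1)).smul_mem c⁻¹ hmem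
        rwa [smul_smul, inv_mul_cancel₀ hc, one_smul] at this
      exact ⟨gen _ _ _ _ h0 e12 m1 m2, gen _ _ _ _ h1 e20 m2 m0, gen _ _ _ _ h2 e01 m0 m1⟩
  have := (key N).1
  rw [hN] at this
  exact hx ((LieSubmodule.mem_bot _).mp this)

end triple

section fwd
variable {k : Type} [Field k] [CharP k 2] {m n : ℕ} {D : Fin n → k}

local notation "MM" => (Matrix.fromBlocks 0 0 0 (Matrix.diagonal D) :
  Matrix (Fin m ⊕ Fin n) (Fin m ⊕ Fin n) k)

lemma sub_std' {ι : Type} [DecidableEq ι] (i j i' j' : ι) (c c' : k) :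
    single i j c - single i' j' c' =
      single i j c + single i' j' c' := by
  rw [sub_eq_add_neg]
  congr 1
  ext a b
  simp only [Matrix.neg_apply, Matrix.single, Matrix.of_apply]
  split_ifs <;> simp [CharTwo.neg_eq]

lemma not_solvable_of_three_le_m (hD : ∀ i, D i ≠ 0) (h3 : 3 ≤ m) :
    ¬ LieAlgebra.IsSolvable ↥(lieO k MM) := by
  set a0 : Fin m := ⟨0, by omega⟩ with ha0
  set a1 : Fin m := ⟨1, by omega⟩ with ha1
  set a2 : Fin m := ⟨2, by omega⟩ with ha2
  have h01 : a0 ≠ a1 := by simp [ha0, ha1, Fin.ext_iff]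
  have h12 : a1 ≠ a2 := by simp [ha1, ha2, Fin.ext_iff]
  have h02 : a0 ≠ a2 := by simp [ha0, ha2, Fin.ext_iff]
  set S : Fin m → Fin m → Matrix (Fin m ⊕ Fin n) (Fin m ⊕ Fin n) k := fun a b =>
    Matrix.fromBlocks (single a b 1 + single b a 1) 0 0 0 with hS
  have hSsymm : ∀ a b, S a b = S b a := by intro a b; rw [hS]; simp [add_comm]
  have memS : ∀ a b, S a b ∈ lieO k MM := fun a b => mem_lieO_blocks _ _ 0 (by simp)
  have lieS : ∀ a b c : Fin m, a ≠ b → b ≠ c → a ≠ c →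
      ⁅S a b, S b c⁆ = (1 : k) • S a c := by
    intro a b c hab hbc hac
    rw [hS]
    simp only [lie_blocks_ll, lie_T hab hbc hac, sub_std', mul_one, one_smul]
  refine triple_not_solvable (K := k)
    ⟨S a0 a1, memS a0 a1⟩ ⟨S a1 a2, memS a1 a2⟩ ⟨S a0 a2, memS a0 a2⟩
    1 1 1 one_ne_zero one_ne_zero one_ne_zero ?_ ?_ ?_ ?_
  · exact Subtype.ext (by rw [LieSubalgebra.coe_bracket]; exact lieS a0 a1 a2 h01 h12 h02)
  · refine Subtype.ext ?_
    rw [LieSubalgebra.coe_bracket]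
    show ⁅S a1 a2, S a0 a2⁆ = (1 : k) • S a0 a1
    rw [hSsymm a0 a2, hSsymm a0 a1]
    exact lieS a1 a2 a0 h12 (Ne.symm h02) (Ne.symm h01)
  · refine Subtype.ext ?_
    rw [LieSubalgebra.coe_bracket]
    show ⁅S a0 a2, S a0 a1⁆ = (1 : k) • S a1 a2
    rw [hSsymm a0 a2, hSsymm a1 a2]
    exact lieS a2 a0 a1 (Ne.symm h02) h01 (Ne.symm h12)
  · intro hzero
    have hcoe : S a0 a1 = 0 := congrArg Subtype.val hzero
    have h := congrFun (congrFun hcoe (inl a0)) (inl a1)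
    simp only [hS] at h
    simp only [Matrix.fromBlocks_apply₁₁, Matrix.add_apply,
      Matrix.single_apply_same, ZeroMemClass.coe_zero, Matrix.zero_apply] at h
    rw [Matrix.single_apply_of_row_ne (Ne.symm h01), add_zero] at h
    exact one_ne_zero h

lemma not_solvable_of_three_le_n (hD : ∀ i, D i ≠ 0) (h3 : 3 ≤ n) :
    ¬ LieAlgebra.IsSolvable ↥(lieO k MM) := by
  set b0 : Fin n := ⟨0, by omega⟩ with hb0
  set b1 : Fin n := ⟨1, by omega⟩ with hb1
  set b2 : Fin n := ⟨2, by omega⟩ with hb2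
  have h01 : b0 ≠ b1 := by simp [hb0, hb1, Fin.ext_iff]
  have h12 : b1 ≠ b2 := by simp [hb1, hb2, Fin.ext_iff]
  have h02 : b0 ≠ b2 := by simp [hb0, hb2, Fin.ext_iff]
  set F : Fin n → Fin n → Matrix (Fin m ⊕ Fin n) (Fin m ⊕ Fin n) k := fun i j =>
    Matrix.fromBlocks 0 0 0 (single i j (D j) + single j i (D i)) with hF
  have hFsymm : ∀ a b, F a b = F b a := by intro a b; rw [hF]; simp [add_comm]
  have memF : ∀ a b, F a b ∈ lieO k MM := fun a b => mem_lieO_blocks 0 0 _ (hE_F a b)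
  have lieF : ∀ a b c : Fin n, a ≠ b → b ≠ c → a ≠ c →
      ⁅F a b, F b c⁆ = D b • F a c := by
    intro a b c hab hbc hac
    rw [hF]
    simp only [lie_blocks_rr, lie_T hab hbc hac, sub_std', Matrix.fromBlocks_smul,
      smul_zero, smul_add, Matrix.smul_single, smul_eq_mul]
  refine triple_not_solvable (K := k)
    ⟨F b0 b1, memF b0 b1⟩ ⟨F b1 b2, memF b1 b2⟩ ⟨F b0 b2, memF b0 b2⟩
    (D b2) (D b0) (D b1) (hD b2) (hD b0) (hD b1) ?_ ?_ ?_ ?_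
  · exact Subtype.ext (by rw [LieSubalgebra.coe_bracket]; exact lieF b0 b1 b2 h01 h12 h02)
  · refine Subtype.ext ?_
    rw [LieSubalgebra.coe_bracket]
    show ⁅F b1 b2, F b0 b2⁆ = D b2 • F b0 b1
    rw [hFsymm b0 b2, hFsymm b0 b1]
    exact lieF b1 b2 b0 h12 (Ne.symm h02) (Ne.symm h01)
  · refine Subtype.ext ?_
    rw [LieSubalgebra.coe_bracket]
    show ⁅F b0 b2, F b0 b1⁆ = D b0 • F b1 b2
    rw [hFsymm b0 b2, hFsymm b1 b2]
    exact lieF b2 b0 b1 (Ne.symm h02) h01 (Ne.symm h12)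
  · intro hzero
    have hcoe : F b0 b1 = 0 := congrArg Subtype.val hzero
    have h := congrFun (congrFun hcoe (inr b0)) (inr b1)
    simp only [hF] at h
    simp only [Matrix.fromBlocks_apply₂₂, Matrix.add_apply,
      Matrix.single_apply_same, ZeroMemClass.coe_zero, Matrix.zero_apply] at h
    rw [Matrix.single_apply_of_row_ne (Ne.symm h01), add_zero] at h
    exact hD b1 h

end fwd


/-- Let `char k = 2`, `m, n ≥ 1`, `D` an invertible diagonal `n × n`
matrix and `M = 0ₘ ⊕ D`.  Then `o(M)` is solvable iff `m ≤ 2` and `n ≤ 2`. -/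
theorem lieO_solvable_iff_of_charTwo (k : Type) [Field k] [CharP k 2]
    (m n : ℕ) (hm : 1 ≤ m) (hn : 1 ≤ n) (D : Fin n → k) (hD : ∀ i, D i ≠ 0) :
    LieAlgebra.IsSolvable
        ↥(lieO k (Matrix.fromBlocks 0 0 0 (Matrix.diagonal D)
          : Matrix (Fin m ⊕ Fin n) (Fin m ⊕ Fin n) k)) ↔
      (m ≤ 2 ∧ n ≤ 2) := by
  constructor
  · intro hs
    constructor
    · by_contra h
      exact not_solvable_of_three_le_m hD (by omega) hs
    · by_contra h
      exact not_solvable_of_three_le_n hD (by omega) hs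
  · rintro ⟨hm2, hn2⟩
    exact solvable_of_le hD hm2 hn2
end

section
/- Let k be a field with char k = 2 and n ≥ 3 an integer. Then: (a) for every invertible diagonal n×n matrix D over k, the radical of o(D) equals the centre of o(D), and both equal the one-dimensional subspace k·I_n spanned by the identity matrix; (b) the radical of the symplectic Lie algebra sp_{2n} equals the centre of sp_{2n}, and both equal k·I_{2n}. -/
open Matrix LieAlgebra

attribute [local instance 100] LieRing.ofAssociativeRing

set_option linter.unusedSectionVars false
set_option maxRecDepth 10000
set_option maxHeartbeats 1000000

section CharTwoHelpers
variable {k : Type} [Field k] [CharP k 2]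

lemma c2_add_eq_zero {a b : k} : a + b = 0 ↔ a = b := by
  rw [add_eq_zero_iff_eq_neg, CharTwo.neg_eq]

lemma c2_neg (a : k) : -a = a := CharTwo.neg_eq a

lemma c2_sub (a b : k) : a - b = a + b := CharTwo.sub_eq_add a b

end CharTwoHelpers

section DiagCase
variable {k : Type} [Field k] [CharP k 2] {n : ℕ}

/-- basis element of `o(D)` -/
def Amat (D : Fin n → k) (p q : Fin n) : Matrix (Fin n) (Fin n) k :=
  Matrix.single p q (D q) + Matrix.single q p (D p)

lemma sB_apply {ι : Type} [DecidableEq ι] (i j a b : ι) (c : k) :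
    Matrix.single i j c a b = if i = a ∧ j = b then c else 0 := rfl

lemma sB_mul_apply {ι : Type} [Fintype ι] [DecidableEq ι] (i j : ι) (c : k)
    (X : Matrix ι ι k) (p q : ι) :
    (Matrix.single i j c * X) p q = if p = i then c * X j q else 0 := by
  rcases eq_or_ne p i with h | h
  · subst h; simp
  · simp [h]

lemma mul_sB_apply {ι : Type} [Fintype ι] [DecidableEq ι] (i j : ι) (c : k)
    (X : Matrix ι ι k) (p q : ι) :
    (X * Matrix.single i j c) p q = if q = j then X p i * c else 0 := by
  rcases eq_or_ne q j with h | h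
  · subst h; simp
  · simp [h]

lemma Amat_apply (D : Fin n → k) (p q a b : Fin n) :
    Amat D p q a b = (if p = a ∧ q = b then D q else 0) + (if q = a ∧ p = b then D p else 0) := by
  simp [Amat, sB_apply, Matrix.add_apply]

lemma mem_lieO_diag_iff {D : Fin n → k} {X : Matrix (Fin n) (Fin n) k} :
    X ∈ lieO k (Matrix.diagonal D) ↔ ∀ p q, D p * X p q = D q * X q p := by
  show Xᵀ * Matrix.diagonal D + Matrix.diagonal D * X = 0 ↔ _
  rw [← Matrix.ext_iff]
  constructor
  · intro h p q
    have := h p q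
    simp only [Matrix.add_apply, Matrix.mul_diagonal, Matrix.diagonal_mul,
      Matrix.transpose_apply, Matrix.zero_apply] at this
    rw [add_comm, c2_add_eq_zero] at this
    rw [this, mul_comm]
  · intro h p q
    simp only [Matrix.add_apply, Matrix.mul_diagonal, Matrix.diagonal_mul,
      Matrix.transpose_apply, Matrix.zero_apply]
    rw [add_comm, c2_add_eq_zero, h p q, mul_comm]

lemma Amat_mem (D : Fin n → k) (p q : Fin n) :
    Amat D p q ∈ lieO k (Matrix.diagonal D) := by
  rw [mem_lieO_diag_iff]
  intro a b
  simp only [Amat_apply]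
  by_cases h1 : p = a <;> by_cases h2 : q = b <;> by_cases h3 : q = a <;> by_cases h4 : p = b <;>
    simp_all <;> ring

lemma Emat_mem (D : Fin n → k) (a : Fin n) :
    Matrix.single a a (1 : k) ∈ lieO k (Matrix.diagonal D) := by
  rw [mem_lieO_diag_iff]
  intro p q
  simp only [sB_apply]
  by_cases h1 : a = p <;> by_cases h2 : a = q <;> simp_all

lemma sB_mul_sB {ι : Type} [Fintype ι] [DecidableEq ι] (i j a b : ι) (c d : k) :
    Matrix.single i j c * Matrix.single a b d =
      if j = a then Matrix.single i b (c * d) else 0 := by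
  rcases eq_or_ne j a with h | h
  · subst h; simp
  · simp [h]

/-- the key structural bracket -/
lemma lie_Amat_Amat (D : Fin n → k) {p q r : Fin n} (hpq : p ≠ q) (hpr : p ≠ r) (hqr : q ≠ r) :
    ⁅Amat D p r, Amat D r q⁆ = D r • Amat D p q := by
  simp only [Ring.lie_def, Amat, Matrix.add_mul, Matrix.mul_add, sB_mul_sB]
  simp only [if_neg hpq, if_neg hpr, if_neg hqr, if_neg (Ne.symm hpq),
    if_neg (Ne.symm hpr), if_neg (Ne.symm hqr), if_true, eq_self_iff_true, add_zero, zero_add]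
  ext a b
  simp only [Matrix.sub_apply, Matrix.add_apply, Matrix.zero_apply, Matrix.smul_apply,
    sB_apply, smul_eq_mul]
  rw [c2_sub]
  split_ifs <;> ring

end DiagCase
section DiagRadical
variable {k : Type} [Field k] [CharP k 2] {n : ℕ}

/-- element of the subalgebra -/
def eA (D : Fin n → k) (p q : Fin n) : ↥(lieO k (Matrix.diagonal D)) :=
  ⟨Amat D p q, Amat_mem D p q⟩

def eE (D : Fin n → k) (a : Fin n) : ↥(lieO k (Matrix.diagonal D)) :=
  ⟨Matrix.single a a 1, Emat_mem D a⟩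

lemma eA_symm (D : Fin n → k) (p q : Fin n) : eA D p q = eA D q p :=
  Subtype.ext (add_comm _ _)

lemma lie_eA_eA (D : Fin n → k) {p q r : Fin n} (hpq : p ≠ q) (hpr : p ≠ r) (hqr : q ≠ r) :
    ⁅eA D p r, eA D r q⁆ = D r • eA D p q := by
  apply Subtype.ext
  rw [LieSubalgebra.coe_bracket]
  exact lie_Amat_Amat D hpq hpr hqr

lemma exists_third (hn : 3 ≤ n) (p q : Fin n) : ∃ r : Fin n, r ≠ p ∧ r ≠ q := by
  by_contra h
  push_neg at h
  have hsub : (Finset.univ : Finset (Fin n)) ⊆ {p, q} := by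
    intro r _
    rcases eq_or_ne r p with h1 | h1
    · simp [h1]
    · simp [h r h1]
  have := Finset.card_le_card hsub
  have h2 : ({p, q} : Finset (Fin n)).card ≤ 2 :=
    le_trans (Finset.card_insert_le _ _) (by simp)
  simp only [Finset.card_univ, Fintype.card_fin] at this
  omega

lemma eA_step (D : Fin n → k) (hD : ∀ i, D i ≠ 0) {J : LieIdeal k ↥(lieO k (Matrix.diagonal D))}
    {x y : Fin n} (h : eA D x y ∈ J) (z : Fin n) (hzx : z ≠ x) (hzy : z ≠ y) (hxy : x ≠ y) :
    eA D x z ∈ J := by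
  have h1 : eA D y x ∈ J := by rwa [← eA_symm]
  have h2 : ⁅eA D z y, eA D y x⁆ ∈ J := J.lie_mem h1
  have h3 : ⁅eA D z y, eA D y x⁆ = D y • eA D z x :=
    lie_eA_eA D hzx hzy hxy
  rw [h3] at h2
  have h4 : eA D z x ∈ J := by
    have := J.smul_mem (D y)⁻¹ h2
    rwa [inv_smul_smul₀ (hD y)] at this
  rwa [eA_symm]

lemma eA_all (D : Fin n → k) (hD : ∀ i, D i ≠ 0)
    {J : LieIdeal k ↥(lieO k (Matrix.diagonal D))}
    {a b : Fin n} (hab : a ≠ b) (h : eA D a b ∈ J) :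
    ∀ p q : Fin n, p ≠ q → eA D p q ∈ J := by
  intro p q hpq
  by_cases hpa : p = a
  · subst hpa
    by_cases hqb : q = b
    · subst hqb; exact h
    · exact eA_step D hD h q (Ne.symm hpq) hqb hab
  · by_cases hpb : p = b
    · subst hpb
      have h1 : eA D p a ∈ J := by rwa [← eA_symm]
      by_cases hqa : q = a
      · subst hqa; exact h1
      · exact eA_step D hD h1 q (Ne.symm hpq) hqa (Ne.symm hab)
    · have h1 : eA D a p ∈ J := eA_step D hD h p hpa hpb hab
      have h2 : eA D p a ∈ J := by rwa [← eA_symm]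
      by_cases hqa : q = a
      · subst hqa; exact h2
      · exact eA_step D hD h2 q (Ne.symm hpq) hqa hpa

lemma eA_derived (D : Fin n → k) (hD : ∀ i, D i ≠ 0) (hn : 3 ≤ n)
    {J : LieIdeal k ↥(lieO k (Matrix.diagonal D))}
    (hall : ∀ p q : Fin n, p ≠ q → eA D p q ∈ J) (m : ℕ) :
    ∀ p q : Fin n, p ≠ q →
      eA D p q ∈ LieAlgebra.derivedSeriesOfIdeal k ↥(lieO k (Matrix.diagonal D)) m J := by
  induction m with
  | zero => simpa [LieAlgebra.derivedSeriesOfIdeal_zero] using hall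
  | succ m ih =>
    intro p q hpq
    obtain ⟨r, hrp, hrq⟩ := exists_third hn p q
    have hbr : ⁅eA D p r, eA D r q⁆ ∈
        LieAlgebra.derivedSeriesOfIdeal k ↥(lieO k (Matrix.diagonal D)) (m + 1) J := by
      rw [LieAlgebra.derivedSeriesOfIdeal_succ]
      exact LieSubmodule.lie_mem_lie (ih p r (Ne.symm hrp)) (ih r q hrq)
    rw [lie_eA_eA D hpq (Ne.symm hrp) (Ne.symm hrq)] at hbr
    have := (LieAlgebra.derivedSeriesOfIdeal k ↥(lieO k (Matrix.diagonal D)) (m + 1) J).smul_mem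
      (D r)⁻¹ hbr
    rwa [inv_smul_smul₀ (hD r)] at this

lemma eA_not_in_radical (D : Fin n → k) (hD : ∀ i, D i ≠ 0) (hn : 3 ≤ n)
    {a b : Fin n} (hab : a ≠ b)
    (h : eA D a b ∈ LieAlgebra.radical k ↥(lieO k (Matrix.diagonal D))) : False := by
  set g := lieO k (Matrix.diagonal D)
  have hall := eA_all D hD hab h
  obtain ⟨m, hm⟩ := LieAlgebra.IsSolvable.solvable (R := k)
    (L := ↥(LieAlgebra.radical k ↥g))
  rw [LieIdeal.derivedSeries_eq_bot_iff] at hm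
  have hmem := eA_derived D hD hn hall m a b hab
  rw [hm, LieSubmodule.mem_bot] at hmem
  have : Amat D a b = 0 := congrArg Subtype.val hmem
  have h2 := congrFun (congrFun this a) b
  simp [Amat_apply, Ne.symm hab] at h2
  exact hD b h2

end DiagRadical
section DiagFinal
variable {k : Type} [Field k] [CharP k 2] {n : ℕ}

lemma lie_E_E (a b : Fin n) (hab : a ≠ b) (Y : Matrix (Fin n) (Fin n) k) :
    ⁅Matrix.single b b (1 : k), ⁅Matrix.single a a (1 : k), Y⁆⁆ =
      Matrix.single a b (Y a b) + Matrix.single b a (Y b a) := by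
  ext p q
  simp only [Ring.lie_def, Matrix.mul_sub, Matrix.sub_mul, Matrix.sub_apply, Matrix.add_apply,
    sB_mul_apply, mul_sB_apply, sB_apply, one_mul, mul_one]
  have hab' : b ≠ a := Ne.symm hab
  by_cases h1 : p = a <;> by_cases h2 : p = b <;> by_cases h3 : q = a <;> by_cases h4 : q = b <;>
    simp_all [c2_sub, c2_neg, eq_comm] <;> ring

lemma radical_offdiag (D : Fin n → k) (hD : ∀ i, D i ≠ 0) (hn : 3 ≤ n)
    (X : ↥(lieO k (Matrix.diagonal D)))
    (hX : X ∈ LieAlgebra.radical k ↥(lieO k (Matrix.diagonal D))) :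
    ∀ a b : Fin n, a ≠ b → (X : Matrix (Fin n) (Fin n) k) a b = 0 := by
  intro a b hab
  by_contra hx
  have hmem : ∀ p q, D p * (X : Matrix (Fin n) (Fin n) k) p q
      = D q * (X : Matrix (Fin n) (Fin n) k) q p := mem_lieO_diag_iff.mp X.2
  set J := LieAlgebra.radical k ↥(lieO k (Matrix.diagonal D)) with hJdef
  have hW : ⁅eE D b, ⁅eE D a, X⁆⁆ ∈ J := J.lie_mem (J.lie_mem hX)
  have hco : (↑⁅eE D b, ⁅eE D a, X⁆⁆ : Matrix (Fin n) (Fin n) k) =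
      Matrix.single a b ((X : Matrix (Fin n) (Fin n) k) a b) +
        Matrix.single b a ((X : Matrix (Fin n) (Fin n) k) b a) := by
    rw [LieSubalgebra.coe_bracket, LieSubalgebra.coe_bracket]
    exact lie_E_E a b hab _
  have hba : (X : Matrix (Fin n) (Fin n) k) b a =
      (D b)⁻¹ * (D a * (X : Matrix (Fin n) (Fin n) k) a b) := by
    rw [hmem a b, inv_mul_cancel_left₀ (hD b)]
  have heq : eA D a b = (D b * ((X : Matrix (Fin n) (Fin n) k) a b)⁻¹) •
      ⁅eE D b, ⁅eE D a, X⁆⁆ := by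
    apply Subtype.ext
    have hsm : (↑((D b * ((X : Matrix (Fin n) (Fin n) k) a b)⁻¹) • ⁅eE D b, ⁅eE D a, X⁆⁆) :
        Matrix (Fin n) (Fin n) k) = (D b * ((X : Matrix (Fin n) (Fin n) k) a b)⁻¹) •
          (↑⁅eE D b, ⁅eE D a, X⁆⁆ : Matrix (Fin n) (Fin n) k) := rfl
    rw [hsm, hco]
    have hA : (↑(eA D a b) : Matrix (Fin n) (Fin n) k) = Amat D a b := rfl
    rw [hA]
    ext p q
    rw [Amat_apply, Matrix.smul_apply, Matrix.add_apply, sB_apply, sB_apply, smul_eq_mul]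
    split_ifs with h1 h2 h2
    · exact absurd (h1.1.trans h2.1.symm) hab
    · field_simp
      ring
    · rw [zero_add, hba]
      field_simp [hD b]
      ring
    · simp
  have : eA D a b ∈ J := by
    rw [heq]
    exact J.smul_mem _ hW
  exact eA_not_in_radical D hD hn hab this

lemma lie_Amat_X_entry (D : Fin n → k) {a b : Fin n} (hab : a ≠ b)
    (Y : Matrix (Fin n) (Fin n) k) :
    ⁅Amat D a b, Y⁆ a b = D b * Y b b - Y a a * D b := by
  simp only [Ring.lie_def, Amat, Matrix.add_mul, Matrix.mul_add, Matrix.sub_apply,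
    Matrix.add_apply, sB_mul_apply, mul_sB_apply]
  simp [hab, Ne.symm hab]

lemma radical_scalar (D : Fin n → k) (hD : ∀ i, D i ≠ 0) (hn : 3 ≤ n)
    (X : ↥(lieO k (Matrix.diagonal D)))
    (hX : X ∈ LieAlgebra.radical k ↥(lieO k (Matrix.diagonal D))) :
    ∃ c : k, (X : Matrix (Fin n) (Fin n) k) = c • 1 := by
  have hoff := radical_offdiag D hD hn X hX
  have hdiag : ∀ a b : Fin n, a ≠ b →
      (X : Matrix (Fin n) (Fin n) k) a a = (X : Matrix (Fin n) (Fin n) k) b b := by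
    intro a b hab
    set J := LieAlgebra.radical k ↥(lieO k (Matrix.diagonal D))
    have hY : ⁅eA D a b, X⁆ ∈ J := J.lie_mem hX
    have h0 := radical_offdiag D hD hn _ hY a b hab
    rw [LieSubalgebra.coe_bracket] at h0
    have h1 : (↑(eA D a b) : Matrix (Fin n) (Fin n) k) = Amat D a b := rfl
    rw [h1, lie_Amat_X_entry D hab, sub_eq_zero] at h0
    rw [mul_comm] at h0
    exact (mul_right_cancel₀ (hD b) h0).symm
  have hne : 0 < n := by omega
  set a0 : Fin n := ⟨0, hne⟩
  refine ⟨(X : Matrix (Fin n) (Fin n) k) a0 a0, ?_⟩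
  ext p q
  rcases eq_or_ne p q with rfl | hpq
  · rw [Matrix.smul_apply, Matrix.one_apply_eq, smul_eq_mul, mul_one]
    rcases eq_or_ne p a0 with rfl | hpa
    · rfl
    · exact hdiag p a0 hpa
  · rw [hoff p q hpq, Matrix.smul_apply, Matrix.one_apply_ne hpq, smul_eq_mul, mul_zero]

lemma lieO_assembly {ι : Type} [Fintype ι] [DecidableEq ι] (M : Matrix ι ι k)
    (hrad : ∀ X : ↥(lieO k M), X ∈ LieAlgebra.radical k ↥(lieO k M) →
      ∃ c : k, (X : Matrix ι ι k) = c • 1) :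
    LieAlgebra.radical k ↥(lieO k M) = LieAlgebra.center k ↥(lieO k M) ∧
      ∀ X : ↥(lieO k M), X ∈ LieAlgebra.radical k ↥(lieO k M) ↔
        ∃ c : k, (X : Matrix ι ι k) = c • 1 := by
  have hsc : ∀ (X : ↥(lieO k M)) (c : k), (X : Matrix ι ι k) = c • 1 →
      X ∈ LieAlgebra.center k ↥(lieO k M) := by
    intro X c h
    rw [LieAlgebra.center, LieModule.mem_maxTrivSubmodule]
    intro Y
    apply Subtype.ext
    rw [LieSubalgebra.coe_bracket]
    show ⁅(Y : Matrix ι ι k), (X : Matrix ι ι k)⁆ = ((0 : ↥(lieO k M)) : Matrix ι ι k)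
    rw [h]
    simp [Ring.lie_def]
  constructor
  · apply le_antisymm
    · intro X hX
      obtain ⟨c, hc⟩ := hrad X hX
      exact hsc X c hc
    · exact LieAlgebra.center_le_radical k ↥(lieO k M)
  · intro X
    exact ⟨hrad X, fun ⟨c, hc⟩ => LieAlgebra.center_le_radical k _ (hsc X c hc)⟩

end DiagFinal
section SpCase
variable {k : Type} [Field k] [CharP k 2] {n : ℕ}

local notation "σ" => @Sum.swap (Fin n) (Fin n)

lemma swap_inj {x y : Fin n ⊕ Fin n} : σ x = σ y ↔ x = y := by
  constructor
  · intro h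
    have := congrArg (@Sum.swap (Fin n) (Fin n)) h
    simpa using this
  · rintro rfl; rfl

lemma swap_ne (x : Fin n ⊕ Fin n) : σ x ≠ x := by
  cases x <;> simp

lemma swap_ne' (x : Fin n ⊕ Fin n) : x ≠ σ x := fun h => swap_ne x h.symm

lemma sweq {x y : Fin n ⊕ Fin n} : σ x = y ↔ x = σ y := by
  constructor
  · rintro rfl; simp
  · rintro rfl; simp

lemma sflip {x y : Fin n ⊕ Fin n} : x = σ y ↔ y = σ x := by
  constructor
  · rintro rfl; simp
  · rintro rfl; simp

/-- the Gram matrix of the symplectic form, in char 2 -/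
lemma spM_apply (p q : Fin n ⊕ Fin n) :
    (Matrix.fromBlocks 0 1 (-1) 0 : Matrix (Fin n ⊕ Fin n) (Fin n ⊕ Fin n) k) p q
      = if σ p = q then 1 else 0 := by
  cases p <;> cases q <;>
    simp [Matrix.fromBlocks, Matrix.one_apply, c2_neg, eq_comm]

lemma spM_mul_apply (X : Matrix (Fin n ⊕ Fin n) (Fin n ⊕ Fin n) k) (p q : Fin n ⊕ Fin n) :
    ((Matrix.fromBlocks 0 1 (-1) 0 : Matrix (Fin n ⊕ Fin n) (Fin n ⊕ Fin n) k) * X) p q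
      = X (σ p) q := by
  rw [Matrix.mul_apply, Finset.sum_eq_single (σ p)]
  · rw [spM_apply, if_pos rfl, one_mul]
  · intro b _ hb
    rw [spM_apply, if_neg (Ne.symm hb), zero_mul]
  · intro h
    exact absurd (Finset.mem_univ _) h

lemma mul_spM_apply (X : Matrix (Fin n ⊕ Fin n) (Fin n ⊕ Fin n) k) (p q : Fin n ⊕ Fin n) :
    (Xᵀ * (Matrix.fromBlocks 0 1 (-1) 0 : Matrix (Fin n ⊕ Fin n) (Fin n ⊕ Fin n) k)) p q
      = X (σ q) p := by
  rw [Matrix.mul_apply, Finset.sum_eq_single (σ q)]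
  · rw [Matrix.transpose_apply, spM_apply, if_pos (by simp), mul_one]
  · intro b _ hb
    rw [spM_apply, if_neg (fun hc => hb (sweq.mp hc)), mul_zero]
  · intro h
    exact absurd (Finset.mem_univ _) h

lemma mem_sp_iff {X : Matrix (Fin n ⊕ Fin n) (Fin n ⊕ Fin n) k} :
    X ∈ lieO k (Matrix.fromBlocks 0 1 (-1) 0 :
        Matrix (Fin n ⊕ Fin n) (Fin n ⊕ Fin n) k) ↔
      ∀ p q, X (σ p) q = X (σ q) p := by
  show Xᵀ * _ + _ * X = 0 ↔ _
  rw [← Matrix.ext_iff]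
  constructor
  · intro h p q
    have := h p q
    rw [Matrix.add_apply, Matrix.zero_apply, spM_mul_apply, mul_spM_apply,
      c2_add_eq_zero] at this
    exact this.symm
  · intro h p q
    rw [Matrix.add_apply, Matrix.zero_apply, spM_mul_apply, mul_spM_apply, c2_add_eq_zero]
    exact (h p q).symm

/-- root-type basis element of `sp` -/
def Bmat (p q : Fin n ⊕ Fin n) : Matrix (Fin n ⊕ Fin n) (Fin n ⊕ Fin n) k :=
  Matrix.single p q 1 + Matrix.single (σ q) (σ p) 1

def Umat (p : Fin n ⊕ Fin n) : Matrix (Fin n ⊕ Fin n) (Fin n ⊕ Fin n) k :=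
  Matrix.single p (σ p) 1

def Hmat (a : Fin n ⊕ Fin n) : Matrix (Fin n ⊕ Fin n) (Fin n ⊕ Fin n) k :=
  Matrix.single a a 1 + Matrix.single (σ a) (σ a) 1

lemma Bmat_mem (p q : Fin n ⊕ Fin n) :
    (Bmat p q : Matrix (Fin n ⊕ Fin n) (Fin n ⊕ Fin n) k) ∈
      lieO k (Matrix.fromBlocks 0 1 (-1) 0) := by
  rw [mem_sp_iff]
  intro p' q'
  obtain ⟨u, rfl⟩ : ∃ u, p' = σ u := ⟨σ p', by simp⟩
  simp only [Bmat, Matrix.add_apply, sB_apply, Sum.swap_swap]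
  by_cases h1 : p = u <;> by_cases h2 : q = q' <;>
    [skip; skip; skip; skip] <;>
    (try simp_all [swap_inj, sweq, swap_ne, swap_ne', and_comm, add_comm]) <;>
    (try (split_ifs <;> simp_all [swap_inj, sweq, swap_ne, swap_ne']))

lemma Umat_mem (p : Fin n ⊕ Fin n) :
    (Umat p : Matrix (Fin n ⊕ Fin n) (Fin n ⊕ Fin n) k) ∈
      lieO k (Matrix.fromBlocks 0 1 (-1) 0) := by
  rw [mem_sp_iff]
  intro p' q'
  obtain ⟨u, rfl⟩ : ∃ u, p' = σ u := ⟨σ p', by simp⟩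
  simp only [Umat, sB_apply, Sum.swap_swap]
  by_cases h1 : p = u <;> by_cases h2 : q' = σ p <;>
    (try simp_all [swap_inj, sweq, swap_ne, swap_ne', and_comm, add_comm]) <;>
    (try (split_ifs <;> simp_all [swap_inj, sweq, swap_ne, swap_ne']))

lemma Hmat_mem (a : Fin n ⊕ Fin n) :
    (Hmat a : Matrix (Fin n ⊕ Fin n) (Fin n ⊕ Fin n) k) ∈
      lieO k (Matrix.fromBlocks 0 1 (-1) 0) := by
  rw [mem_sp_iff]
  intro p' q'
  obtain ⟨u, rfl⟩ : ∃ u, p' = σ u := ⟨σ p', by simp⟩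
  simp only [Hmat, Matrix.add_apply, sB_apply, Sum.swap_swap]
  by_cases h1 : a = u <;> by_cases h2 : a = q' <;>
    (try simp_all [swap_inj, sweq, swap_ne, swap_ne', and_comm, add_comm]) <;>
    (try (split_ifs <;> simp_all [swap_inj, sweq, swap_ne, swap_ne']))

end SpCase
section SpBrackets
variable {k : Type} [Field k] [CharP k 2] {n : ℕ}

local notation "σ" => @Sum.swap (Fin n) (Fin n)

lemma msub {ι : Type} [Fintype ι] [DecidableEq ι] (A B : Matrix ι ι k) : A - B = A + B := by
  ext a b
  rw [Matrix.sub_apply, Matrix.add_apply, c2_sub]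

lemma nswapflip {x y : Fin n ⊕ Fin n} (h : x ≠ σ y) : y ≠ σ x := fun hc => h (by rw [hc]; simp)

lemma sp1 {p q : Fin n ⊕ Fin n} (hq1 : q ≠ p) (hq2 : q ≠ σ p) :
    ⁅(Bmat p q : Matrix (Fin n ⊕ Fin n) (Fin n ⊕ Fin n) k), (Umat q : Matrix (Fin n ⊕ Fin n) (Fin n ⊕ Fin n) k)⁆ = Bmat p (σ q) := by
  simp only [Ring.lie_def, msub, Bmat, Umat, Matrix.add_mul, Matrix.mul_add, sB_mul_sB,
    sweq, swap_inj, Sum.swap_swap, one_mul]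
  simp [hq1, hq2, Ne.symm hq1, Ne.symm hq2, nswapflip hq2, Ne.symm (nswapflip hq2)]
  try abel

lemma sp2 {p q : Fin n ⊕ Fin n} (hq1 : q ≠ p) (hq2 : q ≠ σ p) :
    ⁅(Bmat p q : Matrix (Fin n ⊕ Fin n) (Fin n ⊕ Fin n) k), (Umat (σ p) : Matrix (Fin n ⊕ Fin n) (Fin n ⊕ Fin n) k)⁆ = Bmat (σ p) q := by
  simp only [Ring.lie_def, msub, Bmat, Umat, Matrix.add_mul, Matrix.mul_add, sB_mul_sB,
    sweq, swap_inj, Sum.swap_swap, one_mul]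
  simp [hq1, hq2, Ne.symm hq1, Ne.symm hq2, nswapflip hq2, Ne.symm (nswapflip hq2)]
  try abel

lemma sp3 {p q r : Fin n ⊕ Fin n} (hq1 : q ≠ p) (hq2 : q ≠ σ p)
    (hr1 : r ≠ q) (hr2 : r ≠ σ q) (hr3 : r ≠ p) (hr4 : r ≠ σ p) :
    ⁅(Bmat p q : Matrix (Fin n ⊕ Fin n) (Fin n ⊕ Fin n) k), (Bmat q r : Matrix (Fin n ⊕ Fin n) (Fin n ⊕ Fin n) k)⁆ = Bmat p r := by
  simp only [Ring.lie_def, msub, Bmat, Matrix.add_mul, Matrix.mul_add, sB_mul_sB,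
    sweq, swap_inj, Sum.swap_swap, one_mul]
  simp [hq1, hq2, hr1, hr2, hr3, hr4, Ne.symm hq1, Ne.symm hq2, Ne.symm hr1, Ne.symm hr2,
    Ne.symm hr3, Ne.symm hr4, nswapflip hq2, Ne.symm (nswapflip hq2), nswapflip hr2,
    Ne.symm (nswapflip hr2), nswapflip hr4, Ne.symm (nswapflip hr4)]
  try abel

lemma sp4 {p q r : Fin n ⊕ Fin n} (hq1 : q ≠ p) (hq2 : q ≠ σ p)
    (hp1 : p ≠ r) (hp2 : p ≠ σ r) (hqr : q ≠ r) (hqr2 : q ≠ σ r) :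
    ⁅(Bmat p q : Matrix (Fin n ⊕ Fin n) (Fin n ⊕ Fin n) k), (Bmat r p : Matrix (Fin n ⊕ Fin n) (Fin n ⊕ Fin n) k)⁆ = Bmat r q := by
  simp only [Ring.lie_def, msub, Bmat, Matrix.add_mul, Matrix.mul_add, sB_mul_sB,
    sweq, swap_inj, Sum.swap_swap, one_mul]
  simp [hq1, hq2, hp1, hp2, hqr, hqr2, Ne.symm hq1, Ne.symm hq2, Ne.symm hp1, Ne.symm hp2,
    Ne.symm hqr, Ne.symm hqr2, nswapflip hq2, Ne.symm (nswapflip hq2), nswapflip hp2,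
    Ne.symm (nswapflip hp2), nswapflip hqr2, Ne.symm (nswapflip hqr2)]
  try abel

lemma sp5 {p r : Fin n ⊕ Fin n} (hr1 : r ≠ p) (hr2 : r ≠ σ p) :
    ⁅(Bmat p r : Matrix (Fin n ⊕ Fin n) (Fin n ⊕ Fin n) k), (Bmat r p : Matrix (Fin n ⊕ Fin n) (Fin n ⊕ Fin n) k)⁆ = Hmat p + Hmat r := by
  simp only [Ring.lie_def, msub, Bmat, Hmat, Matrix.add_mul, Matrix.mul_add, sB_mul_sB,
    sweq, swap_inj, Sum.swap_swap, one_mul]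
  simp [hr1, hr2, Ne.symm hr1, Ne.symm hr2, nswapflip hr2, Ne.symm (nswapflip hr2)]
  try abel

lemma sp6a {p q : Fin n ⊕ Fin n} (hq1 : q ≠ p) (hq2 : q ≠ σ p) :
    ⁅(Hmat p : Matrix (Fin n ⊕ Fin n) (Fin n ⊕ Fin n) k), (Bmat p q : Matrix (Fin n ⊕ Fin n) (Fin n ⊕ Fin n) k)⁆ = Bmat p q := by
  simp only [Ring.lie_def, msub, Bmat, Hmat, Matrix.add_mul, Matrix.mul_add, sB_mul_sB,
    sweq, swap_inj, Sum.swap_swap, one_mul]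
  simp [hq1, hq2, Ne.symm hq1, Ne.symm hq2, nswapflip hq2, Ne.symm (nswapflip hq2),
    swap_ne, swap_ne']
  try abel

lemma sp6b {p q r : Fin n ⊕ Fin n} (h1 : r ≠ p) (h2 : r ≠ σ p) (h3 : r ≠ q) (h4 : r ≠ σ q) :
    ⁅(Hmat r : Matrix (Fin n ⊕ Fin n) (Fin n ⊕ Fin n) k), (Bmat p q : Matrix (Fin n ⊕ Fin n) (Fin n ⊕ Fin n) k)⁆ = 0 := by
  simp only [Ring.lie_def, msub, Bmat, Hmat, Matrix.add_mul, Matrix.mul_add, sB_mul_sB,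
    sweq, swap_inj, Sum.swap_swap, one_mul]
  simp [h1, h2, h3, h4, Ne.symm h1, Ne.symm h2, Ne.symm h3, Ne.symm h4,
    nswapflip h2, Ne.symm (nswapflip h2), nswapflip h4, Ne.symm (nswapflip h4)]
  try abel

lemma sp7 (p : Fin n ⊕ Fin n) :
    ⁅(Umat p : Matrix (Fin n ⊕ Fin n) (Fin n ⊕ Fin n) k), (Umat (σ p) : Matrix (Fin n ⊕ Fin n) (Fin n ⊕ Fin n) k)⁆ = Hmat p := by
  simp only [Ring.lie_def, msub, Umat, Hmat, sB_mul_sB, sweq, swap_inj, Sum.swap_swap, one_mul]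
  simp
  try abel

end SpBrackets
section SpEntries
variable {k : Type} [Field k] [CharP k 2] {n : ℕ}

local notation "σ" => @Sum.swap (Fin n) (Fin n)

lemma lieU_apply (r : Fin n ⊕ Fin n) (Y : Matrix (Fin n ⊕ Fin n) (Fin n ⊕ Fin n) k)
    (p q : Fin n ⊕ Fin n) :
    ⁅(Umat r : Matrix (Fin n ⊕ Fin n) (Fin n ⊕ Fin n) k), Y⁆ p q =
      (if p = r then Y (σ r) q else 0) - (if q = σ r then Y p r else 0) := by
  simp only [Ring.lie_def, Umat, Matrix.sub_apply, sB_mul_apply, mul_sB_apply, one_mul, mul_one]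

lemma lieH_apply (a : Fin n ⊕ Fin n) (Y : Matrix (Fin n ⊕ Fin n) (Fin n ⊕ Fin n) k)
    (p q : Fin n ⊕ Fin n) :
    ⁅(Hmat a : Matrix (Fin n ⊕ Fin n) (Fin n ⊕ Fin n) k), Y⁆ p q =
      ((if p = a ∨ p = σ a then (1 : k) else 0) - (if q = a ∨ q = σ a then 1 else 0)) * Y p q := by
  simp only [Ring.lie_def, Hmat, Matrix.add_mul, Matrix.mul_add, Matrix.sub_apply,
    Matrix.add_apply, sB_mul_apply, mul_sB_apply, one_mul, mul_one]
  by_cases h1 : p = a <;> by_cases h2 : p = σ a <;> by_cases h3 : q = a <;>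
    by_cases h4 : q = σ a <;> simp_all [swap_ne, swap_ne'] <;> ring

lemma sp_T (X : Matrix (Fin n ⊕ Fin n) (Fin n ⊕ Fin n) k)
    (hXc : ∀ p q, X (σ p) q = X (σ q) p) {a b : Fin n ⊕ Fin n} (hba : b ≠ a)
    (hbsa : b ≠ σ a) :
    ⁅(Umat (σ a) : Matrix (Fin n ⊕ Fin n) (Fin n ⊕ Fin n) k),
      ⁅(Umat b : Matrix (Fin n ⊕ Fin n) (Fin n ⊕ Fin n) k),
        ⁅(Hmat b : Matrix (Fin n ⊕ Fin n) (Fin n ⊕ Fin n) k), ⁅(Hmat a :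
          Matrix (Fin n ⊕ Fin n) (Fin n ⊕ Fin n) k), X⁆⁆⁆⁆ = X a b • Bmat (σ a) (σ b) := by
  have hXx : X (σ b) (σ a) = X a b := by
    have := hXc b (σ a)
    rwa [Sum.swap_swap] at this
  clear hXc
  have hab : a ≠ b := Ne.symm hba
  have hasb : a ≠ σ b := nswapflip hbsa
  have hsab : σ a ≠ b := Ne.symm hbsa
  have hsba : σ b ≠ a := Ne.symm hasb
  ext p q
  obtain ⟨u, rfl⟩ : ∃ u, p = σ u := ⟨σ p, by simp⟩
  obtain ⟨v, rfl⟩ : ∃ v, q = σ v := ⟨σ q, by simp⟩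
  simp only [lieU_apply, lieH_apply, Sum.swap_swap, Matrix.smul_apply, Bmat, Matrix.add_apply,
    sB_apply, smul_eq_mul]
  by_cases h1 : u = a <;> by_cases h2 : v = σ a <;> by_cases h3 : u = σ b <;>
    by_cases h4 : v = b <;>
    (try simp_all [swap_inj, sweq, sflip, swap_ne, swap_ne', hXx])
  all_goals try ring
  all_goals try (split_ifs <;>
    (try simp_all [CharTwo.two_eq_zero, Sum.swap_swap, swap_inj, sweq, sflip, swap_ne,
      swap_ne']))
  all_goals try ring
  all_goals (intro h; subst h; simp_all)

lemma sp_UX (X : Matrix (Fin n ⊕ Fin n) (Fin n ⊕ Fin n) k)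
    (hXc : ∀ p q, X (σ p) q = X (σ q) p)
    (hoff : ∀ p q, q ≠ p → q ≠ σ p → X p q = 0) (a : Fin n ⊕ Fin n) :
    ⁅(Umat (σ a) : Matrix (Fin n ⊕ Fin n) (Fin n ⊕ Fin n) k), X⁆ = X a (σ a) • Hmat a := by
  have hdiag : X (σ a) (σ a) = X a a := by
    have := hXc a (σ a)
    rwa [Sum.swap_swap] at this
  clear hXc
  ext p q
  rw [lieU_apply]
  have f1 : q ≠ a → q ≠ σ a → X a q = 0 := fun h h' => hoff a q h h'
  have f2 : p ≠ σ a → p ≠ a → X p (σ a) = 0 := fun h h' =>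
    hoff p (σ a) (Ne.symm h) (fun hc => h' (swap_inj.mp hc).symm)
  clear hoff
  have hB : (X a (σ a) • Hmat a) p q = X a (σ a) *
      ((if a = p ∧ a = q then (1 : k) else 0) + (if σ a = p ∧ σ a = q then 1 else 0)) := by
    simp [Hmat, sB_apply, Matrix.smul_apply, Matrix.add_apply]
  rw [hB, Sum.swap_swap]
  by_cases h1 : p = σ a
  · subst h1
    rw [if_pos rfl]
    by_cases h2 : q = a
    · subst q
      rw [if_pos rfl, hdiag, sub_self,
        if_neg (fun hc : a = σ a ∧ a = a => swap_ne' a hc.1),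
        if_neg (fun hc : σ a = σ a ∧ σ a = a => swap_ne a hc.2)]
      simp
    · rw [if_neg h2, sub_zero]
      by_cases h4 : q = σ a
      · subst h4
        rw [if_neg (fun hc : a = σ a ∧ _ => swap_ne' a hc.1), if_pos ⟨rfl, rfl⟩]
        simp
      · rw [f1 h2 h4, if_neg (fun hc : a = σ a ∧ _ => swap_ne' a hc.1),
          if_neg (fun hc : σ a = σ a ∧ σ a = q => h4 hc.2.symm)]
        simp
  · rw [if_neg h1]
    by_cases h2 : q = a
    · subst q
      by_cases h3 : p = a
      · subst p
        rw [if_pos rfl, if_pos ⟨rfl, rfl⟩,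
          if_neg (fun hc : σ a = a ∧ _ => swap_ne a hc.1)]
        rw [zero_sub, c2_neg]
        ring
      · rw [if_pos rfl, f2 h1 h3, zero_sub, neg_zero,
          if_neg (fun hc : a = p ∧ _ => h3 hc.1.symm),
          if_neg (fun hc : σ a = p ∧ _ => h1 hc.1.symm)]
        simp
    · rw [if_neg h2, sub_zero,
        if_neg (fun hc : a = p ∧ a = q => h2 hc.2.symm),
        if_neg (fun hc : σ a = p ∧ σ a = q => h1 hc.1.symm)]
      simp

lemma sp_BX_entry {a b : Fin n ⊕ Fin n} (hba : b ≠ a) (hbsa : b ≠ σ a)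
    (X : Matrix (Fin n ⊕ Fin n) (Fin n ⊕ Fin n) k) :
    ⁅(Bmat a b : Matrix (Fin n ⊕ Fin n) (Fin n ⊕ Fin n) k), X⁆ a b = X b b - X a a := by
  have hasb : a ≠ σ b := nswapflip hbsa
  simp only [Ring.lie_def, Bmat, Matrix.add_mul, Matrix.mul_add, Matrix.sub_apply,
    Matrix.add_apply, sB_mul_apply, mul_sB_apply, one_mul, mul_one]
  simp [hasb, hbsa]

end SpEntries
section SpRadical
variable {k : Type} [Field k] [CharP k 2] {n : ℕ}

local notation "σ" => @Sum.swap (Fin n) (Fin n)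
local notation "spM" => (Matrix.fromBlocks 0 1 (-1) 0 :
  Matrix (Fin n ⊕ Fin n) (Fin n ⊕ Fin n) k)

lemma lieIdeal_lie_mem_left {R L : Type} [CommRing R] [LieRing L] [LieAlgebra R L]
    (J : LieIdeal R L) {x : L} (h : x ∈ J) (y : L) : ⁅x, y⁆ ∈ J := by
  have h2 : ⁅y, x⁆ ∈ J := J.lie_mem h
  have h3 : -⁅y, x⁆ ∈ J := by
    have := J.smul_mem (-1 : R) h2
    rwa [neg_one_smul] at this
  rwa [lie_skew] at h3

def eB (p q : Fin n ⊕ Fin n) : ↥(lieO k spM) := ⟨Bmat p q, Bmat_mem p q⟩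

def eU (p : Fin n ⊕ Fin n) : ↥(lieO k spM) := ⟨Umat p, Umat_mem p⟩

def eH (a : Fin n ⊕ Fin n) : ↥(lieO k spM) := ⟨Hmat a, Hmat_mem a⟩

lemma eB_swap (p q : Fin n ⊕ Fin n) : (eB p q : ↥(lieO k spM)) = eB (σ q) (σ p) := by
  apply Subtype.ext
  show Bmat p q = Bmat (σ q) (σ p)
  rw [Bmat, Bmat, Sum.swap_swap, Sum.swap_swap, add_comm]

lemma el1 {p q : Fin n ⊕ Fin n} (hq1 : q ≠ p) (hq2 : q ≠ σ p) :
    ⁅(eB p q : ↥(lieO k spM)), (eU q : ↥(lieO k spM))⁆ = eB p (σ q) :=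
  Subtype.ext (by rw [LieSubalgebra.coe_bracket]; exact sp1 hq1 hq2)

lemma el2 {p q : Fin n ⊕ Fin n} (hq1 : q ≠ p) (hq2 : q ≠ σ p) :
    ⁅(eB p q : ↥(lieO k spM)), (eU (σ p) : ↥(lieO k spM))⁆ = eB (σ p) q :=
  Subtype.ext (by rw [LieSubalgebra.coe_bracket]; exact sp2 hq1 hq2)

lemma el3 {p q r : Fin n ⊕ Fin n} (hq1 : q ≠ p) (hq2 : q ≠ σ p)
    (hr1 : r ≠ q) (hr2 : r ≠ σ q) (hr3 : r ≠ p) (hr4 : r ≠ σ p) :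
    ⁅(eB p q : ↥(lieO k spM)), (eB q r : ↥(lieO k spM))⁆ = eB p r :=
  Subtype.ext (by rw [LieSubalgebra.coe_bracket]; exact sp3 hq1 hq2 hr1 hr2 hr3 hr4)

lemma el4 {p q r : Fin n ⊕ Fin n} (hq1 : q ≠ p) (hq2 : q ≠ σ p)
    (hp1 : p ≠ r) (hp2 : p ≠ σ r) (hqr : q ≠ r) (hqr2 : q ≠ σ r) :
    ⁅(eB p q : ↥(lieO k spM)), (eB r p : ↥(lieO k spM))⁆ = eB r q :=
  Subtype.ext (by rw [LieSubalgebra.coe_bracket]; exact sp4 hq1 hq2 hp1 hp2 hqr hqr2)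

lemma el5 {p r : Fin n ⊕ Fin n} (hr1 : r ≠ p) (hr2 : r ≠ σ p) :
    ⁅(eB p r : ↥(lieO k spM)), (eB r p : ↥(lieO k spM))⁆ = (eH p : ↥(lieO k spM)) + eH r :=
  Subtype.ext (by
    rw [LieSubalgebra.coe_bracket]
    show _ = Hmat p + Hmat r
    exact sp5 hr1 hr2)

lemma el6a {p q : Fin n ⊕ Fin n} (hq1 : q ≠ p) (hq2 : q ≠ σ p) :
    ⁅(eH p : ↥(lieO k spM)), (eB p q : ↥(lieO k spM))⁆ = eB p q :=
  Subtype.ext (by rw [LieSubalgebra.coe_bracket]; exact sp6a hq1 hq2)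

lemma el6b {p q r : Fin n ⊕ Fin n} (h1 : r ≠ p) (h2 : r ≠ σ p) (h3 : r ≠ q) (h4 : r ≠ σ q) :
    ⁅(eH r : ↥(lieO k spM)), (eB p q : ↥(lieO k spM))⁆ = (0 : ↥(lieO k spM)) :=
  Subtype.ext (by
    rw [LieSubalgebra.coe_bracket]
    show _ = (0 : Matrix (Fin n ⊕ Fin n) (Fin n ⊕ Fin n) k)
    exact sp6b h1 h2 h3 h4)

lemma el7 (p : Fin n ⊕ Fin n) : ⁅(eU p : ↥(lieO k spM)), (eU (σ p) : ↥(lieO k spM))⁆ = eH p :=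
  Subtype.ext (by rw [LieSubalgebra.coe_bracket]; exact sp7 p)

/-- σ-closure of membership in an ideal -/
lemma sclo {J : LieIdeal k ↥(lieO k spM)} {p q : Fin n ⊕ Fin n}
    (hq1 : q ≠ p) (hq2 : q ≠ σ p) (h : (eB p q : ↥(lieO k spM)) ∈ J) :
    (eB p (σ q) : ↥(lieO k spM)) ∈ J ∧ (eB (σ p) q : ↥(lieO k spM)) ∈ J ∧
      (eB (σ p) (σ q) : ↥(lieO k spM)) ∈ J := by
  have h1 : (eB p (σ q) : ↥(lieO k spM)) ∈ J := by
    rw [← el1 hq1 hq2]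
    exact lieIdeal_lie_mem_left J h _
  have h2 : (eB (σ p) q : ↥(lieO k spM)) ∈ J := by
    rw [← el2 hq1 hq2]
    exact lieIdeal_lie_mem_left J h _
  refine ⟨h1, h2, ?_⟩
  have hq1' : q ≠ σ (σ p) := by rw [Sum.swap_swap]; exact hq1
  rw [← el1 hq2 hq1']
  exact lieIdeal_lie_mem_left J h2 _

/-- move the second index to a fresh spot -/
lemma stepB {J : LieIdeal k ↥(lieO k spM)} {p q : Fin n ⊕ Fin n}
    (hq1 : q ≠ p) (hq2 : q ≠ σ p) (h : (eB p q : ↥(lieO k spM)) ∈ J)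
    {r : Fin n ⊕ Fin n} (h1 : r ≠ p) (h2 : r ≠ σ p) (h3 : r ≠ q) (h4 : r ≠ σ q) :
    (eB p r : ↥(lieO k spM)) ∈ J ∧ (eB r q : ↥(lieO k spM)) ∈ J := by
  constructor
  · rw [← el3 hq1 hq2 h3 h4 h1 h2]
    exact lieIdeal_lie_mem_left J h _
  · rw [← el4 hq1 hq2 (Ne.symm h1) (nswapflip h2) (Ne.symm h3) (nswapflip h4)]
    exact lieIdeal_lie_mem_left J h _

end SpRadical
section SpRadical2
variable {k : Type} [Field k] [CharP k 2] {n : ℕ}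

local notation "σ" => @Sum.swap (Fin n) (Fin n)
local notation "spM" => (Matrix.fromBlocks 0 1 (-1) 0 :
  Matrix (Fin n ⊕ Fin n) (Fin n ⊕ Fin n) k)

lemma sclo' {J : LieIdeal k ↥(lieO k spM)} {x y : Fin n ⊕ Fin n}
    (h1 : y ≠ x) (h2 : y ≠ σ x) (h : (eB x y : ↥(lieO k spM)) ∈ J)
    {x' y' : Fin n ⊕ Fin n} (hx : x' = x ∨ x' = σ x) (hy : y' = y ∨ y' = σ y) :
    (eB x' y' : ↥(lieO k spM)) ∈ J := by
  obtain ⟨hA, hB, hC⟩ := sclo h1 h2 h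
  rcases hx with rfl | rfl <;> rcases hy with rfl | rfl <;> assumption

lemma allB {J : LieIdeal k ↥(lieO k spM)} {c d : Fin n ⊕ Fin n}
    (hd1 : d ≠ c) (hd2 : d ≠ σ c) (h : (eB c d : ↥(lieO k spM)) ∈ J) :
    ∀ p q : Fin n ⊕ Fin n, q ≠ p → q ≠ σ p → (eB p q : ↥(lieO k spM)) ∈ J := by
  intro p q hq1 hq2
  by_cases hp1 : p = c ∨ p = σ c
  · -- validity of the pair (p, d)
    have vd1 : d ≠ p := by rcases hp1 with rfl | rfl; exacts [hd1, hd2]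
    have vd2 : d ≠ σ p := by
      rcases hp1 with rfl | rfl
      · exact hd2
      · rw [Sum.swap_swap]; exact hd1
    have hpd : (eB p d : ↥(lieO k spM)) ∈ J := sclo' hd1 hd2 h hp1 (Or.inl rfl)
    by_cases hqd : q = d ∨ q = σ d
    · exact sclo' vd1 vd2 hpd (Or.inl rfl) hqd
    · push_neg at hqd
      exact (stepB vd1 vd2 hpd hq1 hq2 hqd.1 hqd.2).1
  · push_neg at hp1
    by_cases hp2 : p = d ∨ p = σ d
    · have h' : (eB (σ d) (σ c) : ↥(lieO k spM)) ∈ J := by rw [← eB_swap]; exact h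
      have v1 : σ c ≠ σ d := fun hc => hd1 (swap_inj.mp hc).symm
      have v2 : σ c ≠ σ (σ d) := by rw [Sum.swap_swap]; exact Ne.symm hd2
      have hx : p = σ d ∨ p = σ (σ d) := by
        rcases hp2 with rfl | rfl
        · right; rw [Sum.swap_swap]
        · left; rfl
      have hpc : (eB p (σ c) : ↥(lieO k spM)) ∈ J := sclo' v1 v2 h' hx (Or.inl rfl)
      have w1 : σ c ≠ p := fun hc => hp1.2 hc.symm
      have w2 : σ c ≠ σ p := fun hc => hp1.1 (swap_inj.mp hc).symm
      by_cases hqc : q = σ c ∨ q = c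
      · refine sclo' w1 w2 hpc (Or.inl rfl) ?_
        rcases hqc with rfl | rfl
        · left; rfl
        · right; rw [Sum.swap_swap]
      · push_neg at hqc
        have hq3 : q ≠ σ (σ c) := by rw [Sum.swap_swap]; exact hqc.2
        exact (stepB w1 w2 hpc hq1 hq2 hqc.1 hq3).1
    · push_neg at hp2
      have hstep := stepB hd1 hd2 h hp1.1 hp1.2 hp2.1 hp2.2
      have vd1 : d ≠ p := Ne.symm hp2.1
      have vd2 : d ≠ σ p := nswapflip hp2.2
      by_cases hqd : q = d ∨ q = σ d
      · exact sclo' vd1 vd2 hstep.2 (Or.inl rfl) hqd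
      · by_cases hqc : q = c ∨ q = σ c
        · have h'' : (eB (σ p) (σ c) : ↥(lieO k spM)) ∈ J := by
            rw [← eB_swap]; exact hstep.1
          have u1 : σ c ≠ σ p := fun hc => hp1.1 (swap_inj.mp hc).symm
          have u2 : σ c ≠ σ (σ p) := by
            rw [Sum.swap_swap]; exact fun hc => hp1.2 hc.symm
          refine sclo' u1 u2 h'' (Or.inr (by rw [Sum.swap_swap])) ?_
          rcases hqc with rfl | rfl
          · right; rw [Sum.swap_swap]
          · left; rfl
        · push_neg at hqd hqc
          exact (stepB vd1 vd2 hstep.2 hq1 hq2 hqd.1 hqd.2).1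

def sidx : Fin n ⊕ Fin n → Fin n := Sum.elim id id

lemma sidx_swap (x : Fin n ⊕ Fin n) : sidx (σ x) = sidx x := by cases x <;> rfl

lemma exists_fresh (hn : 3 ≤ n) (p q : Fin n ⊕ Fin n) :
    ∃ r : Fin n ⊕ Fin n, r ≠ p ∧ r ≠ σ p ∧ r ≠ q ∧ r ≠ σ q := by
  obtain ⟨i, hip, hiq⟩ := exists_third hn (sidx p) (sidx q)
  refine ⟨Sum.inl i, ?_, ?_, ?_, ?_⟩
  · exact fun hc => hip (by rw [← hc]; rfl)
  · exact fun hc => hip (by rw [← sidx_swap p, ← hc]; rfl)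
  · exact fun hc => hiq (by rw [← hc]; rfl)
  · exact fun hc => hiq (by rw [← sidx_swap q, ← hc]; rfl)

lemma eB_derived (hn : 3 ≤ n) {J : LieIdeal k ↥(lieO k spM)}
    (hall : ∀ p q : Fin n ⊕ Fin n, q ≠ p → q ≠ σ p → (eB p q : ↥(lieO k spM)) ∈ J) (m : ℕ) :
    ∀ p q : Fin n ⊕ Fin n, q ≠ p → q ≠ σ p →
      (eB p q : ↥(lieO k spM)) ∈ LieAlgebra.derivedSeriesOfIdeal k ↥(lieO k spM) m J := by
  induction m with
  | zero => simpa [LieAlgebra.derivedSeriesOfIdeal_zero] using hall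
  | succ m ih =>
    intro p q hq1 hq2
    obtain ⟨r, hr1, hr2, hr3, hr4⟩ := exists_fresh hn p q
    have hid : ⁅⁅(eB p r : ↥(lieO k spM)), (eB r p : ↥(lieO k spM))⁆,
        (eB p q : ↥(lieO k spM))⁆ = eB p q := by
      rw [el5 hr1 hr2, add_lie, el6a hq1 hq2, el6b hr1 hr2 hr3 hr4, add_zero]
    have m1 := ih p r hr1 hr2
    have m2 := ih r p (Ne.symm hr1) (nswapflip hr2)
    have m3 := ih p q hq1 hq2
    have hb1 : ⁅(eB p r : ↥(lieO k spM)), (eB r p : ↥(lieO k spM))⁆ ∈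
        LieAlgebra.derivedSeriesOfIdeal k ↥(lieO k spM) m J :=
      LieAlgebra.derivedSeriesOfIdeal_succ_le J m (by
        rw [LieAlgebra.derivedSeriesOfIdeal_succ]
        exact LieSubmodule.lie_mem_lie m1 m2)
    have hfin : ⁅⁅(eB p r : ↥(lieO k spM)), (eB r p : ↥(lieO k spM))⁆,
        (eB p q : ↥(lieO k spM))⁆ ∈
          LieAlgebra.derivedSeriesOfIdeal k ↥(lieO k spM) (m + 1) J := by
      rw [LieAlgebra.derivedSeriesOfIdeal_succ]
      exact LieSubmodule.lie_mem_lie hb1 m3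
    rwa [hid] at hfin

lemma eB_not_in_radical (hn : 3 ≤ n) {c d : Fin n ⊕ Fin n} (hd1 : d ≠ c) (hd2 : d ≠ σ c)
    (h : (eB c d : ↥(lieO k spM)) ∈ LieAlgebra.radical k ↥(lieO k spM)) : False := by
  have hall := allB hd1 hd2 h
  obtain ⟨m, hm⟩ := LieAlgebra.IsSolvable.solvable (R := k)
    (L := ↥(LieAlgebra.radical k ↥(lieO k spM)))
  rw [LieIdeal.derivedSeries_eq_bot_iff] at hm
  have hmem := eB_derived hn hall m c d hd1 hd2
  rw [hm, LieSubmodule.mem_bot] at hmem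
  have h0 : (Bmat c d : Matrix (Fin n ⊕ Fin n) (Fin n ⊕ Fin n) k) = 0 :=
    congrArg Subtype.val hmem
  have h2 : (Bmat c d : Matrix (Fin n ⊕ Fin n) (Fin n ⊕ Fin n) k) c d = 0 := by
    rw [h0]; rfl
  simp [Bmat, Matrix.add_apply, sB_apply, sweq, hd2] at h2

end SpRadical2
section SpFinal
variable {k : Type} [Field k] [CharP k 2] {n : ℕ}

local notation "σ" => @Sum.swap (Fin n) (Fin n)
local notation "spM" => (Matrix.fromBlocks 0 1 (-1) 0 :
  Matrix (Fin n ⊕ Fin n) (Fin n ⊕ Fin n) k)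

lemma sp_offdiag (hn : 3 ≤ n) (X : ↥(lieO k spM))
    (hX : X ∈ LieAlgebra.radical k ↥(lieO k spM)) :
    ∀ a b : Fin n ⊕ Fin n, b ≠ a → b ≠ σ a →
      (X : Matrix (Fin n ⊕ Fin n) (Fin n ⊕ Fin n) k) a b = 0 := by
  intro a b hba hbsa
  by_contra hx
  set J := LieAlgebra.radical k ↥(lieO k spM) with hJ
  have hXc : ∀ p q, (X : Matrix (Fin n ⊕ Fin n) (Fin n ⊕ Fin n) k) (σ p) q =
      (X : Matrix (Fin n ⊕ Fin n) (Fin n ⊕ Fin n) k) (σ q) p := mem_sp_iff.mp X.2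
  have hT : ⁅(eU (σ a) : ↥(lieO k spM)), ⁅(eU b : ↥(lieO k spM)),
      ⁅(eH b : ↥(lieO k spM)), ⁅(eH a : ↥(lieO k spM)), X⁆⁆⁆⁆ ∈ J :=
    J.lie_mem (J.lie_mem (J.lie_mem (J.lie_mem hX)))
  have hco : (↑⁅(eU (σ a) : ↥(lieO k spM)), ⁅(eU b : ↥(lieO k spM)),
      ⁅(eH b : ↥(lieO k spM)), ⁅(eH a : ↥(lieO k spM)), X⁆⁆⁆⁆ :
        Matrix (Fin n ⊕ Fin n) (Fin n ⊕ Fin n) k) =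
      (X : Matrix (Fin n ⊕ Fin n) (Fin n ⊕ Fin n) k) a b • Bmat (σ a) (σ b) := by
    rw [LieSubalgebra.coe_bracket, LieSubalgebra.coe_bracket, LieSubalgebra.coe_bracket,
      LieSubalgebra.coe_bracket]
    exact sp_T _ hXc hba hbsa
  have heq : (eB (σ a) (σ b) : ↥(lieO k spM)) =
      ((X : Matrix (Fin n ⊕ Fin n) (Fin n ⊕ Fin n) k) a b)⁻¹ •
        ⁅(eU (σ a) : ↥(lieO k spM)), ⁅(eU b : ↥(lieO k spM)),
          ⁅(eH b : ↥(lieO k spM)), ⁅(eH a : ↥(lieO k spM)), X⁆⁆⁆⁆ := by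
    apply Subtype.ext
    have hsm : (↑(((X : Matrix (Fin n ⊕ Fin n) (Fin n ⊕ Fin n) k) a b)⁻¹ •
        ⁅(eU (σ a) : ↥(lieO k spM)), ⁅(eU b : ↥(lieO k spM)),
          ⁅(eH b : ↥(lieO k spM)), ⁅(eH a : ↥(lieO k spM)), X⁆⁆⁆⁆) :
            Matrix (Fin n ⊕ Fin n) (Fin n ⊕ Fin n) k) =
        ((X : Matrix (Fin n ⊕ Fin n) (Fin n ⊕ Fin n) k) a b)⁻¹ •
          (↑⁅(eU (σ a) : ↥(lieO k spM)), ⁅(eU b : ↥(lieO k spM)),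
            ⁅(eH b : ↥(lieO k spM)), ⁅(eH a : ↥(lieO k spM)), X⁆⁆⁆⁆ :
              Matrix (Fin n ⊕ Fin n) (Fin n ⊕ Fin n) k) := rfl
    rw [hsm, hco, inv_smul_smul₀ hx]
    rfl
  have hmem : (eB (σ a) (σ b) : ↥(lieO k spM)) ∈ J := by
    rw [heq]
    exact J.smul_mem _ hT
  exact eB_not_in_radical hn (fun hc => hba (swap_inj.mp hc))
    (by rw [Sum.swap_swap]; exact Ne.symm (nswapflip hbsa)) hmem

lemma sp_long (hn : 3 ≤ n) (X : ↥(lieO k spM))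
    (hX : X ∈ LieAlgebra.radical k ↥(lieO k spM)) :
    ∀ a : Fin n ⊕ Fin n, (X : Matrix (Fin n ⊕ Fin n) (Fin n ⊕ Fin n) k) a (σ a) = 0 := by
  intro a
  by_contra hx
  set J := LieAlgebra.radical k ↥(lieO k spM) with hJ
  have hXc : ∀ p q, (X : Matrix (Fin n ⊕ Fin n) (Fin n ⊕ Fin n) k) (σ p) q =
      (X : Matrix (Fin n ⊕ Fin n) (Fin n ⊕ Fin n) k) (σ q) p := mem_sp_iff.mp X.2
  have hoff : ∀ p q : Fin n ⊕ Fin n, q ≠ p → q ≠ σ p →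
      (X : Matrix (Fin n ⊕ Fin n) (Fin n ⊕ Fin n) k) p q = 0 := fun p q h h' =>
    sp_offdiag hn X hX p q h h'
  have hY : ⁅(eU (σ a) : ↥(lieO k spM)), X⁆ ∈ J := J.lie_mem hX
  have hco : (↑⁅(eU (σ a) : ↥(lieO k spM)), X⁆ :
      Matrix (Fin n ⊕ Fin n) (Fin n ⊕ Fin n) k) =
      (X : Matrix (Fin n ⊕ Fin n) (Fin n ⊕ Fin n) k) a (σ a) • Hmat a := by
    rw [LieSubalgebra.coe_bracket]
    exact sp_UX _ hXc hoff a
  have hH : (eH a : ↥(lieO k spM)) ∈ J := by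
    have heq : (eH a : ↥(lieO k spM)) =
        ((X : Matrix (Fin n ⊕ Fin n) (Fin n ⊕ Fin n) k) a (σ a))⁻¹ •
          ⁅(eU (σ a) : ↥(lieO k spM)), X⁆ := by
      apply Subtype.ext
      have hsm : (↑(((X : Matrix (Fin n ⊕ Fin n) (Fin n ⊕ Fin n) k) a (σ a))⁻¹ •
          ⁅(eU (σ a) : ↥(lieO k spM)), X⁆) : Matrix (Fin n ⊕ Fin n) (Fin n ⊕ Fin n) k) =
          ((X : Matrix (Fin n ⊕ Fin n) (Fin n ⊕ Fin n) k) a (σ a))⁻¹ •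
            (↑⁅(eU (σ a) : ↥(lieO k spM)), X⁆ :
              Matrix (Fin n ⊕ Fin n) (Fin n ⊕ Fin n) k) := rfl
      rw [hsm, hco, inv_smul_smul₀ hx]
      rfl
    rw [heq]
    exact J.smul_mem _ hY
  obtain ⟨r, hr1, hr2, _, _⟩ := exists_fresh hn a a
  have hBr : (eB a r : ↥(lieO k spM)) ∈ J := by
    rw [← el6a hr1 hr2]
    exact lieIdeal_lie_mem_left J hH _
  exact eB_not_in_radical hn hr1 hr2 hBr

lemma sp_scalar (hn : 3 ≤ n) (X : ↥(lieO k spM))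
    (hX : X ∈ LieAlgebra.radical k ↥(lieO k spM)) :
    ∃ c : k, (X : Matrix (Fin n ⊕ Fin n) (Fin n ⊕ Fin n) k) =
      c • (1 : Matrix (Fin n ⊕ Fin n) (Fin n ⊕ Fin n) k) := by
  set J := LieAlgebra.radical k ↥(lieO k spM) with hJ
  have hXc : ∀ p q, (X : Matrix (Fin n ⊕ Fin n) (Fin n ⊕ Fin n) k) (σ p) q =
      (X : Matrix (Fin n ⊕ Fin n) (Fin n ⊕ Fin n) k) (σ q) p := mem_sp_iff.mp X.2
  have hoff := sp_offdiag hn X hX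
  have hlong := sp_long hn X hX
  have hdiag0 : ∀ x, (X : Matrix (Fin n ⊕ Fin n) (Fin n ⊕ Fin n) k) (σ x) (σ x) =
      (X : Matrix (Fin n ⊕ Fin n) (Fin n ⊕ Fin n) k) x x := by
    intro x
    have := hXc x (σ x)
    rwa [Sum.swap_swap] at this
  have hdiag : ∀ a b : Fin n ⊕ Fin n, b ≠ a → b ≠ σ a →
      (X : Matrix (Fin n ⊕ Fin n) (Fin n ⊕ Fin n) k) a a =
        (X : Matrix (Fin n ⊕ Fin n) (Fin n ⊕ Fin n) k) b b := by
    intro a b h1 h2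
    have hY : ⁅(eB a b : ↥(lieO k spM)), X⁆ ∈ J := J.lie_mem hX
    have h0 := sp_offdiag hn _ hY a b h1 h2
    rw [LieSubalgebra.coe_bracket] at h0
    have h0' : ⁅(Bmat a b : Matrix (Fin n ⊕ Fin n) (Fin n ⊕ Fin n) k),
        (X : Matrix (Fin n ⊕ Fin n) (Fin n ⊕ Fin n) k)⁆ a b = 0 := h0
    rw [sp_BX_entry h1 h2, sub_eq_zero] at h0'
    exact h0'.symm
  have hne : 0 < n := by omega
  refine ⟨(X : Matrix (Fin n ⊕ Fin n) (Fin n ⊕ Fin n) k) (Sum.inl ⟨0, hne⟩) (Sum.inl ⟨0, hne⟩),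
    ?_⟩
  ext p q
  rcases eq_or_ne p q with rfl | hpq
  · rw [Matrix.smul_apply, Matrix.one_apply_eq, smul_eq_mul, mul_one]
    by_cases h1 : p = Sum.inl ⟨0, hne⟩
    · rw [h1]
    · by_cases h2 : p = σ (Sum.inl ⟨0, hne⟩)
      · rw [h2]
        exact hdiag0 _
      · exact (hdiag (Sum.inl ⟨0, hne⟩) p h1 h2).symm
  · rw [Matrix.smul_apply, Matrix.one_apply_ne hpq, smul_eq_mul, mul_zero]
    by_cases h2 : q = σ p
    · rw [h2]
      exact hlong p
    · exact hoff p q (Ne.symm hpq) h2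

end SpFinal

/-- Let `char k = 2` and `n ≥ 3`.  (a) For every invertible diagonal
`n × n` matrix `D`, the radical of `o(D)` equals the centre of `o(D)`, and both equal the
line `k • 1ₙ`.  (b) The radical of `sp₂ₙ = o(Π₂ₙ)` equals the centre of `sp₂ₙ`, and both
equal the line `k • 1₂ₙ`. -/
theorem radical_eq_center_lieO_of_charTwo (k : Type) [Field k] [CharP k 2]
    (n : ℕ) (hn : 3 ≤ n) :
    (∀ D : Fin n → k, (∀ i, D i ≠ 0) →
      LieAlgebra.radical k ↥(lieO k (Matrix.diagonal D)) =
        LieAlgebra.center k ↥(lieO k (Matrix.diagonal D)) ∧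
      (∀ X : ↥(lieO k (Matrix.diagonal D)),
        X ∈ LieAlgebra.radical k ↥(lieO k (Matrix.diagonal D)) ↔
          ∃ c : k, (X : Matrix (Fin n) (Fin n) k) = c • (1 : Matrix (Fin n) (Fin n) k))) ∧
    (LieAlgebra.radical k ↥(lieO k
        (Matrix.fromBlocks 0 1 (-1) 0 : Matrix (Fin n ⊕ Fin n) (Fin n ⊕ Fin n) k)) =
      LieAlgebra.center k ↥(lieO k
        (Matrix.fromBlocks 0 1 (-1) 0 : Matrix (Fin n ⊕ Fin n) (Fin n ⊕ Fin n) k)) ∧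
    (∀ X : ↥(lieO k
        (Matrix.fromBlocks 0 1 (-1) 0 : Matrix (Fin n ⊕ Fin n) (Fin n ⊕ Fin n) k)),
      X ∈ LieAlgebra.radical k ↥(lieO k
          (Matrix.fromBlocks 0 1 (-1) 0 : Matrix (Fin n ⊕ Fin n) (Fin n ⊕ Fin n) k)) ↔
        ∃ c : k, (X : Matrix (Fin n ⊕ Fin n) (Fin n ⊕ Fin n) k) =
          c • (1 : Matrix (Fin n ⊕ Fin n) (Fin n ⊕ Fin n) k))) := by
  constructor
  · intro D hD
    exact lieO_assembly (Matrix.diagonal D) (radical_scalar D hD hn)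
  · exact lieO_assembly _ (sp_scalar hn)
end
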